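/- arXiv:1905.09316 — 3 statements merged into one kernel-verified Lean document; each statement's English description precedes it below -/
import Mathlib

section
/- Let k be a field, G a group, K ≤ G a subgroup, and V a finite-dimensional k-linear representation of K; let V̌ = Hom_k(V, k) be its full linear dual with the contragredient K-action. Then the formula ⟨f̌, f⟩ = Σ_{Kg ∈ K\G} ⟨f̌(g), f(g)⟩ (a finite sum, since f is supported on finitely many cosets Kg, and independent of the choice of coset representatives) defines a G-invariant k-bilinear pairing I_K^G V̌ × ind_K^G V → k, and the induced k-linear map I_K^G V̌ → Hom_k(ind_K^G V, k) is a G-equivariant isomorphism onto the full linear dual of ind_K^G V equipped with the contragredient G-action. -/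
open scoped BigOperators

noncomputable section

universe u

variable {k : Type u} [Field k] {G : Type u} [Group G]

/-- The full induction `I_K^G W`: all functions `f : G → W` with `f (κ g) = κ • f g`,
with `G` acting by right translation. -/
def IndFull (k : Type u) [Field k] {G : Type u} [Group G] (K : Subgroup G)
    {W : Type u} [AddCommGroup W] [Module k W] (ρ : Representation k ↥K W) :
    Submodule k (G → W) where
  carrier := {f | ∀ (κ : ↥K) (g : G), f ((κ : G) * g) = ρ κ (f g)}
  add_mem' := by
    intro f g hf hg κ x
    simp [hf κ x, hg κ x]
  zero_mem' := by intro κ x; simp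
  smul_mem' := by
    intro c f hf κ x
    simp [hf κ x]

/-- Functions whose support is contained in finitely many right cosets `Kg`. -/
def FinOnCosets (k : Type u) [Field k] {G : Type u} [Group G] (K : Subgroup G)
    (W : Type u) [AddCommGroup W] [Module k W] : Submodule k (G → W) where
  carrier := {f | (Quotient.mk (QuotientGroup.rightRel K) '' Function.support f).Finite}
  add_mem' := by
    intro f g hf hg
    refine Set.Finite.subset (hf.union hg) ?_
    rw [← Set.image_union]
    exact Set.image_mono (Function.support_add f g)
  zero_mem' := by simp
  smul_mem' := by
    intro c f hf
    refine Set.Finite.subset hf (Set.image_mono ?_)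
    intro x hx
    simp only [Function.mem_support, Pi.smul_apply] at hx ⊢
    intro h
    exact hx (by rw [h, smul_zero])

namespace Stmt0Aux

variable (K : Subgroup G) {V : Type u} [AddCommGroup V] [Module k V]
  (ρ : Representation k ↥K V)

local notation "Q" => Quotient (QuotientGroup.rightRel K)
local notation "mkq" => Quotient.mk (QuotientGroup.rightRel K)
local notation "Ind" => (IndFull k K ρ ⊓ FinOnCosets k K V : Submodule k (G → V))

lemma pair_rel {fc : G → Module.Dual k V} {f : G → V}
    (hfc : fc ∈ IndFull k K ρ.dual) (hf : f ∈ IndFull k K ρ)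
    (a b : G) (h : QuotientGroup.rightRel K a b) : fc a (f a) = fc b (f b) := by
  rw [QuotientGroup.rightRel_apply] at h
  have hb : b = ((⟨b * a⁻¹, h⟩ : K) : G) * a := by group
  rw [hb, hfc _ a, hf _ a]
  simp only [Representation.dual_apply, Module.Dual.transpose_apply, LinearMap.comp_apply]
  have : (ρ (⟨b * a⁻¹, h⟩ : K)⁻¹ * ρ (⟨b * a⁻¹, h⟩ : K)) (f a) = f a := by
    rw [← map_mul, inv_mul_cancel, map_one, Module.End.one_apply]
  have h2 : (ρ ⟨b * a⁻¹, h⟩⁻¹) ((ρ ⟨b * a⁻¹, h⟩) (f a)) = f a := by simpa using this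
  exact congrArg _ h2.symm

variable {K}

def pairT (fc : ↥(IndFull k K ρ.dual)) (f : ↥Ind) : Q → k :=
  Quotient.lift (fun x => fc.1 x (f.1 x))
    (fun a b h => pair_rel K ρ fc.2 f.2.1 a b h)

lemma pairT_mk (fc : ↥(IndFull k K ρ.dual)) (f : ↥Ind) (x : G) :
    pairT ρ fc f (mkq x) = fc.1 x (f.1 x) := rfl

lemma pairT_support (fc : ↥(IndFull k K ρ.dual)) (f : ↥Ind) :
    Function.support (pairT ρ fc f) ⊆ mkq '' Function.support f.1 := by
  intro q hq
  induction q using Quotient.ind with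
  | _ x =>
    refine ⟨x, ?_, rfl⟩
    intro h0
    exact hq (by simp [pairT_mk, h0])

lemma pairT_support_finite (fc : ↥(IndFull k K ρ.dual)) (f : ↥Ind) :
    (Function.support (pairT ρ fc f)).Finite :=
  Set.Finite.subset f.2.2 (pairT_support ρ fc f)

/-- the pairing value -/
def phi0 (fc : ↥(IndFull k K ρ.dual)) (f : ↥Ind) : k := ∑ᶠ q, pairT ρ fc f q

lemma phi0_eq_sum (fc : ↥(IndFull k K ρ.dual)) (f : ↥Ind) (S : Finset Q)
    (h : Function.support (pairT ρ fc f) ⊆ ↑S) :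
    phi0 ρ fc f = ∑ q ∈ S, pairT ρ fc f q :=
  finsum_eq_finset_sum_of_support_subset _ h

lemma phi0_add_right (fc : ↥(IndFull k K ρ.dual)) (f f' : ↥Ind) :
    phi0 ρ fc (f + f') = phi0 ρ fc f + phi0 ρ fc f' := by
  classical
  set S : Finset Q := (f.2.2.union f'.2.2).toFinset with hS
  have hsub : (mkq '' Function.support f.1 ∪ mkq '' Function.support f'.1) ⊆ ↑S := by
    rw [hS, Set.Finite.coe_toFinset]
  have h1 : Function.support (pairT ρ fc f) ⊆ ↑S :=
    (pairT_support ρ fc f).trans (Set.subset_union_left.trans hsub)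
  have h2 : Function.support (pairT ρ fc f') ⊆ ↑S :=
    (pairT_support ρ fc f').trans (Set.subset_union_right.trans hsub)
  have h3 : Function.support (pairT ρ fc (f + f')) ⊆ ↑S := by
    refine (pairT_support ρ fc (f + f')).trans (Set.Subset.trans ?_ hsub)
    rw [← Set.image_union]
    exact Set.image_mono (Function.support_add _ _)
  rw [phi0_eq_sum ρ fc f S h1, phi0_eq_sum ρ fc f' S h2, phi0_eq_sum ρ fc (f + f') S h3,
    ← Finset.sum_add_distrib]
  refine Finset.sum_congr rfl fun q _ => ?_
  induction q using Quotient.ind with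
  | _ x => simp [pairT_mk]

lemma phi0_smul_right (fc : ↥(IndFull k K ρ.dual)) (c : k) (f : ↥Ind) :
    phi0 ρ fc (c • f) = c * phi0 ρ fc f := by
  have : pairT ρ fc (c • f) = fun q => c • pairT ρ fc f q := by
    funext q
    induction q using Quotient.ind with
    | _ x => simp [pairT_mk, smul_eq_mul]
  rw [phi0, this, ← smul_finsum c (pairT ρ fc f)]
  rfl

lemma phi0_add_left (fc fc' : ↥(IndFull k K ρ.dual)) (f : ↥Ind) :
    phi0 ρ (fc + fc') f = phi0 ρ fc f + phi0 ρ fc' f := by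
  have h : pairT ρ (fc + fc') f = fun q => pairT ρ fc f q + pairT ρ fc' f q := by
    funext q
    induction q using Quotient.ind with
    | _ x => simp [pairT_mk]
  rw [phi0, h, finsum_add_distrib (pairT_support_finite ρ fc f) (pairT_support_finite ρ fc' f)]
  rfl

lemma phi0_smul_left (c : k) (fc : ↥(IndFull k K ρ.dual)) (f : ↥Ind) :
    phi0 ρ (c • fc) f = c * phi0 ρ fc f := by
  have : pairT ρ (c • fc) f = fun q => c • pairT ρ fc f q := by
    funext q
    induction q using Quotient.ind with
    | _ x => simp [pairT_mk, smul_eq_mul]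
  rw [phi0, this, ← smul_finsum c (pairT ρ fc f)]
  rfl

/-- The pairing as a linear map into the dual. -/
def Phi : ↥(IndFull k K ρ.dual) →ₗ[k] Module.Dual k ↥Ind where
  toFun fc :=
    { toFun := phi0 ρ fc
      map_add' := phi0_add_right ρ fc
      map_smul' := fun c f => phi0_smul_right ρ fc c f }
  map_add' fc fc' := LinearMap.ext fun f => phi0_add_left ρ fc fc' f
  map_smul' c fc := LinearMap.ext fun f => phi0_smul_left ρ c fc f

lemma Phi_apply (fc : ↥(IndFull k K ρ.dual)) (f : ↥Ind) :
    Phi ρ fc f = ∑ᶠ q, pairT ρ fc f q := rfl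

lemma Phi_single (fc : ↥(IndFull k K ρ.dual)) (f : ↥Ind) (g : G)
    (hsupp : ∀ x, f.1 x ≠ 0 → mkq x = mkq g) :
    Phi ρ fc f = fc.1 g (f.1 g) := by
  rw [Phi_apply]
  rw [finsum_eq_single _ (mkq g) ?_]
  · rfl
  · intro q hq
    induction q using Quotient.ind with
    | _ x =>
      by_contra h0
      exact hq (hsupp x (fun h => h0 (by simp [pairT_mk, h])))




open Classical

/-- The single-coset function supported on `K g` with value `v` at `g`. -/
def Efun (g : G) (v : V) : G → V :=
  fun x => if h : x * g⁻¹ ∈ K then ρ ⟨x * g⁻¹, h⟩ v else 0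

lemma Efun_self (g : G) (v : V) : Efun ρ g v g = v := by
  have h : g * g⁻¹ ∈ K := by rw [mul_inv_cancel]; exact K.one_mem
  rw [Efun, dif_pos h]
  have : (⟨g * g⁻¹, h⟩ : ↥K) = 1 := by ext; simp
  rw [this, map_one, Module.End.one_apply]

lemma Efun_supp (g : G) (v : V) (x : G) (hx : Efun ρ g v x ≠ 0) : mkq x = mkq g := by
  rw [Efun] at hx
  by_cases h : x * g⁻¹ ∈ K
  · exact (Quotient.sound ((QuotientGroup.rightRel_apply).2 (by simpa using h))).symm
  · exact absurd (dif_neg h) hx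

lemma Efun_mem_IndFull (g : G) (v : V) : Efun ρ g v ∈ IndFull k K ρ := by
  intro κ x
  by_cases h : x * g⁻¹ ∈ K
  · have h' : (κ : G) * x * g⁻¹ ∈ K := by
      have := K.mul_mem κ.2 h
      simpa [mul_assoc] using this
    rw [Efun, Efun, dif_pos h, dif_pos (by simpa [mul_assoc] using h')]
    have hsub : (⟨(κ : G) * x * (g⁻¹ : G), by simpa [mul_assoc] using h'⟩ : ↥K)
        = κ * ⟨x * g⁻¹, h⟩ := by ext; simp [mul_assoc]
    have hcg := congrArg (fun t : ↥K => ρ t v) hsub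
    simp only [map_mul, Module.End.mul_apply] at hcg
    exact hcg
  · have h' : ¬ ((κ : G) * x * g⁻¹ ∈ K) := by
      intro hc
      refine h ?_
      have := K.mul_mem (K.inv_mem κ.2) hc
      simpa [mul_assoc] using this
    rw [Efun, Efun, dif_neg (by simpa [mul_assoc] using h'), dif_neg h, map_zero]

lemma Efun_mem (g : G) (v : V) : Efun ρ g v ∈ IndFull k K ρ ⊓ FinOnCosets k K V := by
  refine ⟨Efun_mem_IndFull ρ g v, ?_⟩
  refine Set.Finite.subset (Set.finite_singleton (mkq g)) ?_
  rintro q ⟨x, hx, rfl⟩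
  exact Efun_supp ρ g v x hx

/-- The single-coset function as a linear map in `v`. -/
def Elin (g : G) : V →ₗ[k] ↥Ind where
  toFun v := ⟨Efun ρ g v, Efun_mem ρ g v⟩
  map_add' v w := by
    apply Subtype.ext
    funext x
    show Efun ρ g (v + w) x = Efun ρ g v x + Efun ρ g w x
    by_cases h : x * g⁻¹ ∈ K <;> simp [Efun, h]
  map_smul' c v := by
    apply Subtype.ext
    funext x
    show Efun ρ g (c • v) x = c • Efun ρ g v x
    by_cases h : x * g⁻¹ ∈ K <;> simp [Efun, h]

lemma Efun_kappa (κ : ↥K) (g : G) (v : V) :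
    Efun ρ ((κ : G) * g) v = Efun ρ g (ρ κ⁻¹ v) := by
  funext x
  have hx1 : x * ((κ : G) * g)⁻¹ = x * g⁻¹ * (κ : G)⁻¹ := by group
  have hiff : x * ((κ : G) * g)⁻¹ ∈ K ↔ x * g⁻¹ ∈ K := by
    rw [hx1]
    constructor
    · intro h
      have := K.mul_mem h κ.2
      simpa using this
    · intro h
      exact K.mul_mem h (K.inv_mem κ.2)
  by_cases h : x * g⁻¹ ∈ K
  · rw [Efun, Efun, dif_pos (hiff.2 h), dif_pos h]
    have hsub : (⟨x * ((κ : G) * g)⁻¹, hiff.2 h⟩ : ↥K) = ⟨x * g⁻¹, h⟩ * κ⁻¹ := by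
      ext
      simp [hx1, mul_assoc]
    have hcg := congrArg (fun t : ↥K => ρ t v) hsub
    simp only [map_mul, Module.End.mul_apply] at hcg
    exact hcg
  · rw [Efun, Efun, dif_neg (fun hc => h (hiff.1 hc)), dif_neg h]

/-- Decomposition of an element of `ind` as a finite sum of single-coset functions. -/
lemma decomp (f : ↥Ind) :
    f = ∑ q ∈ f.2.2.toFinset, Elin ρ (Quotient.out q) (f.1 (Quotient.out q)) := by
  classical
  apply Subtype.ext
  rw [AddSubmonoidClass.coe_finset_sum]
  funext x
  rw [Finset.sum_apply]
  have hterm : ∀ q : Q, (((Elin ρ (Quotient.out q) (f.1 (Quotient.out q))) : ↥Ind) : G → V) x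
      = Efun ρ (Quotient.out q) (f.1 (Quotient.out q)) x := fun _ => rfl
  by_cases hx : mkq x ∈ f.2.2.toFinset
  · rw [Finset.sum_eq_single (mkq x)]
    · rw [hterm]
      have hrel : x * (Quotient.out (mkq x))⁻¹ ∈ K := by
        have := Quotient.mk_out' (s₁ := QuotientGroup.rightRel K) x
        exact (QuotientGroup.rightRel_apply).1 this
      rw [Efun, dif_pos hrel]
      have hxeq : x = ((⟨x * (Quotient.out (mkq x))⁻¹, hrel⟩ : ↥K) : G)
          * Quotient.out (mkq x) := by group
      conv_lhs => rw [hxeq]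
      exact f.2.1 _ _
    · intro q hq hne
      rw [hterm]
      by_contra h0
      exact hne (((Efun_supp ρ _ _ x h0).trans (Quotient.out_eq q)).symm)
    · intro h
      exact absurd hx h
  · have hfx : f.1 x = 0 := by
      by_contra h0
      exact hx ((Set.Finite.mem_toFinset _).2 ⟨x, h0, rfl⟩)
    rw [hfx]
    refine (Finset.sum_eq_zero ?_).symm
    intro q hq
    rw [hterm]
    by_contra h0
    have : mkq x = q := (Efun_supp ρ _ _ x h0).trans (Quotient.out_eq q)
    exact hx (this ▸ hq)

lemma Phi_injective : Function.Injective (Phi (K := K) ρ) := by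
  rw [injective_iff_map_eq_zero]
  intro fc hfc
  apply Subtype.ext
  funext g
  apply LinearMap.ext
  intro v
  have h := Phi_single ρ fc (⟨Efun ρ g v, Efun_mem ρ g v⟩) g (Efun_supp ρ g v)
  rw [hfc] at h
  simp only [LinearMap.zero_apply] at h
  rw [Efun_self] at h
  simpa using h.symm

lemma Phi_surjective : Function.Surjective (Phi (K := K) ρ) := by
  intro Λ
  classical
  set fcf : G → Module.Dual k V := fun g => Λ ∘ₗ Elin ρ g with hfcf
  have hmem : fcf ∈ IndFull k K ρ.dual := by
    intro κ g
    apply LinearMap.ext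
    intro v
    show Λ (Elin ρ ((κ : G) * g) v) = (ρ.dual κ (Λ ∘ₗ Elin ρ g)) v
    have h2 : (ρ.dual κ (Λ ∘ₗ Elin ρ g)) v = Λ (Elin ρ g (ρ κ⁻¹ v)) := rfl
    rw [h2]
    congr 1
    apply Subtype.ext
    exact Efun_kappa ρ κ g v
  refine ⟨⟨fcf, hmem⟩, ?_⟩
  apply LinearMap.ext
  intro f
  have hdec := decomp ρ f
  have hS : Function.support (pairT ρ ⟨fcf, hmem⟩ f) ⊆ ↑f.2.2.toFinset := by
    refine (pairT_support ρ _ f).trans ?_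
    exact fun q hq => (Set.Finite.mem_toFinset _).2 hq
  rw [Phi_apply, finsum_eq_finset_sum_of_support_subset _ hS]
  conv_rhs => rw [hdec]
  rw [map_sum]
  refine Finset.sum_congr rfl fun q _ => ?_
  have h1 : pairT ρ ⟨fcf, hmem⟩ f q = fcf (Quotient.out q) (f.1 (Quotient.out q)) := by
    conv_lhs => rw [← Quotient.out_eq q]
    rfl
  rw [h1]
  rfl



/-- Right translation by `g` on the coset space `K\G`. -/
def cosetEquiv (g : G) : Q ≃ Q :=
  Quotient.congr (Equiv.mulRight g) (by
    intro a b
    simp only [Equiv.coe_mulRight]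
    rw [QuotientGroup.rightRel_apply, QuotientGroup.rightRel_apply]
    rw [show b * g * (a * g)⁻¹ = b * a⁻¹ by group])

lemma cosetEquiv_mk (g : G) (x : G) : cosetEquiv (K := K) g (mkq x) = mkq (x * g) := rfl

lemma translate_mem_IndFull {W : Type u} [AddCommGroup W] [Module k W]
    (ρW : Representation k ↥K W) (g : G) (f : G → W) (hf : f ∈ IndFull k K ρW) :
    (fun x => f (x * g)) ∈ IndFull k K ρW := by
  intro κ x
  have := hf κ (x * g)
  simpa [mul_assoc] using this

lemma translate_mem_Fin {W : Type u} [AddCommGroup W] [Module k W]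
    (g : G) (f : G → W) (hf : f ∈ FinOnCosets k K W) :
    (fun x => f (x * g)) ∈ FinOnCosets k K W := by
  refine Set.Finite.subset (Set.Finite.image (cosetEquiv (K := K) g⁻¹) hf) ?_
  rintro q ⟨x, hx, rfl⟩
  refine ⟨mkq (x * g), ⟨x * g, hx, rfl⟩, ?_⟩
  rw [cosetEquiv_mk, mul_inv_cancel_right]

lemma Phi_formula (σ : Q → G) (hσ : ∀ q, mkq (σ q) = q)
    (fc : ↥(IndFull k K ρ.dual)) (f : ↥Ind) :
    Phi ρ fc f = ∑ᶠ q, (fc.1 (σ q)) (f.1 (σ q)) := by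
  rw [Phi_apply]
  refine finsum_congr fun q => ?_
  conv_lhs => rw [← hσ q]
  rfl

lemma Phi_equivariant (g : G) (fc : ↥(IndFull k K ρ.dual))
    (h1 : (fun x => fc.1 (x * g)) ∈ IndFull k K ρ.dual)
    (f : ↥Ind) (h2 : (fun x => f.1 (x * g⁻¹)) ∈ IndFull k K ρ ⊓ FinOnCosets k K V) :
    Phi ρ ⟨fun x => fc.1 (x * g), h1⟩ f = Phi ρ fc ⟨fun x => f.1 (x * g⁻¹), h2⟩ := by
  rw [Phi_apply, Phi_apply]
  have key : ∀ q : Q, pairT ρ ⟨fun x => fc.1 (x * g), h1⟩ f q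
      = pairT ρ fc ⟨fun x => f.1 (x * g⁻¹), h2⟩ (cosetEquiv (K := K) g q) := by
    intro q
    induction q using Quotient.ind with
    | _ x =>
      rw [cosetEquiv_mk]
      show (fc.1 (x * g)) (f.1 x) = (fc.1 (x * g)) (f.1 (x * g * g⁻¹))
      rw [mul_inv_cancel_right]
  rw [finsum_congr key]
  exact finsum_comp_equiv (cosetEquiv (K := K) g)

end Stmt0Aux

/-- Let `K ≤ G` and let `V` be a finite-dimensional `k`-linear representation
of `K`, with full linear dual `V̌` carrying the contragredient action `ρ.dual`.  Then:
(1),(2): both `I_K^G V̌` and `ind_K^G V` are stable under right translation by `G`; and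
(3): the formula `⟨fc, f⟩ = Σ_{Kg ∈ K\G} ⟨fc(g), f(g)⟩` (a finite sum over the right cosets,
independent of the chosen coset representatives — we quantify over all sections `σ` of
`G → K\G`) defines a `k`-linear map `Φ : I_K^G V̌ → Hom_k(ind_K^G V, k)` which is bijective
and `G`-equivariant for the contragredient `G`-action on the dual:
`Φ(g·fc)(f) = Φ(fc)(g⁻¹·f)` where `(g·f)(x) = f(xg)`. -/
theorem stmt0 (K : Subgroup G) (V : Type u) [AddCommGroup V] [Module k V]
    [FiniteDimensional k V] (ρ : Representation k ↥K V) :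
    (∀ (g : G) (f : G → Module.Dual k V), f ∈ IndFull k K ρ.dual →
      (fun x => f (x * g)) ∈ IndFull k K ρ.dual) ∧
    (∀ (g : G) (f : G → V), f ∈ IndFull k K ρ ⊓ FinOnCosets k K V →
      (fun x => f (x * g)) ∈ IndFull k K ρ ⊓ FinOnCosets k K V) ∧
    (∃ Φ : ↥(IndFull k K ρ.dual) →ₗ[k] Module.Dual k ↥(IndFull k K ρ ⊓ FinOnCosets k K V),
      Function.Bijective Φ ∧
      (∀ σ : Quotient (QuotientGroup.rightRel K) → G,
        (∀ q, Quotient.mk (QuotientGroup.rightRel K) (σ q) = q) →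
        ∀ (fc : ↥(IndFull k K ρ.dual)) (f : ↥(IndFull k K ρ ⊓ FinOnCosets k K V)),
          Φ fc f = ∑ᶠ q : Quotient (QuotientGroup.rightRel K), (fc.1 (σ q)) (f.1 (σ q))) ∧
      (∀ (g : G) (fc : ↥(IndFull k K ρ.dual))
        (h1 : (fun x => fc.1 (x * g)) ∈ IndFull k K ρ.dual)
        (f : ↥(IndFull k K ρ ⊓ FinOnCosets k K V))
        (h2 : (fun x => f.1 (x * g⁻¹)) ∈ IndFull k K ρ ⊓ FinOnCosets k K V),
        Φ ⟨fun x => fc.1 (x * g), h1⟩ f = Φ fc ⟨fun x => f.1 (x * g⁻¹), h2⟩)) := by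
  refine ⟨?_, ?_, ?_⟩
  · intro g f hf
    exact Stmt0Aux.translate_mem_IndFull ρ.dual g f hf
  · intro g f hf
    exact ⟨Stmt0Aux.translate_mem_IndFull ρ g f hf.1, Stmt0Aux.translate_mem_Fin g f hf.2⟩
  · refine ⟨Stmt0Aux.Phi ρ, ⟨Stmt0Aux.Phi_injective ρ, Stmt0Aux.Phi_surjective ρ⟩, ?_, ?_⟩
    · intro σ hσ fc f
      exact Stmt0Aux.Phi_formula ρ σ hσ fc f
    · intro g fc h1 f h2
      exact Stmt0Aux.Phi_equivariant ρ g fc h1 f h2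
end
end

section
/- Let p be a prime and let (N, ω) be a p-valued group. Let N₁, N₂, N₃ ≤ N be subgroups such that the multiplication map N₁ × N₂ × N₃ → N, (n₁, n₂, n₃) ↦ n₁n₂n₃, is a bijection, and such that ω(n₁n₂n₃) = min{ω(n₁), ω(n₂), ω(n₃)} for all n₁ ∈ N₁, n₂ ∈ N₂, n₃ ∈ N₃ (with the convention ω(1) = +∞). Equip each N_j with the restriction of ω. Then for every v > 0 the inclusions N_j ⊆ N induce an isomorphism of 𝔽_p-vector spaces gr_v N₁ ⊕ gr_v N₂ ⊕ gr_v N₃ ≅ gr_v N, and summing over v > 0 these give an isomorphism of 𝔽_p[π]-modules gr N₁ ⊕ gr N₂ ⊕ gr N₃ ≅ gr N. -/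
open scoped ENNReal
open scoped commutatorElement

/-- A `p`-valuation `ω` on a group `N` (Lazard).  We encode `ω : N → ℝ≥0∞` with the
convention `ω x = ∞ ↔ x = 1`, so that the axioms, required in the paper only for
`x, y ≠ 1`, can be stated unconditionally.  For `x ≠ 1` the value `ω x` is a real number
in the interval `(1/(p-1), ∞)`. -/
structure IsPValuation (p : ℕ) {N : Type*} [Group N] (ω : N → ℝ≥0∞) : Prop where
  eq_top_iff : ∀ x, ω x = ⊤ ↔ x = 1
  one_div_lt : ∀ x, x ≠ 1 → 1 / ((p : ℝ≥0∞) - 1) < ω x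
  inv_mul : ∀ x y, min (ω x) (ω y) ≤ ω (x⁻¹ * y)
  commutator : ∀ x y, ω x + ω y ≤ ω (x * y * x⁻¹ * y⁻¹)
  pow_p : ∀ x, ω (x ^ p) = ω x + 1

set_option linter.unusedSectionVars false
set_option linter.unusedVariables false
set_option linter.unusedTactic false

namespace PV

variable {p : ℕ} {N : Type*} [Group N] {ω : N → ℝ≥0∞} {v : ℝ≥0∞}

theorem omega_one (hω : IsPValuation p ω) : ω (1 : N) = ⊤ := (hω.eq_top_iff 1).2 rfl

theorem omega_inv_le (hω : IsPValuation p ω) (x : N) : ω x ≤ ω x⁻¹ := by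
  have := hω.inv_mul x 1
  simpa [omega_one hω] using this

theorem omega_inv (hω : IsPValuation p ω) (x : N) : ω x⁻¹ = ω x :=
  le_antisymm (by simpa using omega_inv_le hω x⁻¹) (omega_inv_le hω x)

theorem omega_mul (hω : IsPValuation p ω) (x y : N) : min (ω x) (ω y) ≤ ω (x * y) := by
  have := hω.inv_mul x⁻¹ y
  simpa [omega_inv hω] using this

theorem omega_conj (hω : IsPValuation p ω) (g x : N) : ω x ≤ ω (g * x * g⁻¹) := by
  have h1 : ω x ≤ ω (g * x * g⁻¹ * x⁻¹) ⊔ ω x := le_max_right _ _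
  have key : min (ω (g * x * g⁻¹ * x⁻¹)) (ω x) ≤ ω ((g * x * g⁻¹ * x⁻¹) * x) :=
    omega_mul hω _ _
  have hcomm : ω g + ω x ≤ ω (g * x * g⁻¹ * x⁻¹) := hω.commutator g x
  have hx : ω x ≤ ω (g * x * g⁻¹ * x⁻¹) := le_trans (le_add_self) hcomm
  calc ω x = min (ω (g * x * g⁻¹ * x⁻¹)) (ω x) := (min_eq_right hx).symm
    _ ≤ ω ((g * x * g⁻¹ * x⁻¹) * x) := key
    _ = ω (g * x * g⁻¹) := by group

theorem omega_pow (hω : IsPValuation p ω) (x : N) : ∀ n : ℕ, ω x ≤ ω (x ^ n)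
  | 0 => by simp [omega_one hω]
  | (n+1) => by
      have h := omega_pow hω x n
      have h2 := omega_mul hω (x ^ n) x
      rw [pow_succ]
      exact le_trans (le_min h le_rfl) h2

theorem omega_comm (hω : IsPValuation p ω) (x y : N) : ω x + ω y ≤ ω ⁅x, y⁆ := by
  rw [commutatorElement_def]; exact hω.commutator x y

section Pfacts
variable (hp : p.Prime)
include hp

theorem pm1_one_le : (1:ℝ≥0∞) ≤ (p : ℝ≥0∞) - 1 := by
  have h2 : (2:ℝ≥0∞) ≤ (p:ℝ≥0∞) := by exact_mod_cast hp.two_le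
  refine ENNReal.le_sub_of_add_le_left (by norm_num) ?_
  calc (1:ℝ≥0∞) + 1 = 2 := by norm_num
    _ ≤ (p:ℝ≥0∞) := h2

theorem pm1_pos : (0:ℝ≥0∞) < (p : ℝ≥0∞) - 1 :=
  lt_of_lt_of_le zero_lt_one (pm1_one_le hp)

omit hp in
theorem pm1_ne_top : ((p : ℝ≥0∞) - 1) ≠ ⊤ :=
  ne_top_of_le_ne_top (ENNReal.natCast_ne_top p) tsub_le_self

theorem div_pm1_lt_top (i : ℕ) : ((i:ℝ≥0∞)) / ((p : ℝ≥0∞) - 1) < ⊤ :=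
  ENNReal.div_lt_top (ENNReal.natCast_ne_top i) (pm1_pos hp).ne'

theorem one_div_add_one : (1:ℝ≥0∞) / ((p:ℝ≥0∞) - 1) + 1 = (p:ℝ≥0∞) / ((p:ℝ≥0∞) - 1) := by
  have hple : (1:ℝ≥0∞) ≤ (p:ℝ≥0∞) := by exact_mod_cast hp.one_lt.le
  have hq0 := (pm1_pos hp).ne'
  have hqt := pm1_ne_top (p := p)
  set q := (p:ℝ≥0∞) - 1 with hqdef
  have hpeq : (p:ℝ≥0∞) = 1 + q := by
    rw [hqdef, add_comm, tsub_add_cancel_of_le hple]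
  rw [hpeq, ENNReal.add_div, ENNReal.div_self hq0 hqt, add_comm]

end Pfacts

/-- Weight-`i` filtration predicate. -/
def Gam (p : ℕ) (ω : N → ℝ≥0∞) (v : ℝ≥0∞) (i : ℕ) (x : N) : Prop :=
  (i : ℝ≥0∞) * v ≤ ω x ∧ (i : ℝ≥0∞) / ((p : ℝ≥0∞) - 1) < ω x

section GamLemmas
variable (hp : p.Prime) (hω : IsPValuation p ω)
include hp hω

theorem gam_one (i : ℕ) : Gam p ω v i (1 : N) := by
  constructor
  · rw [omega_one hω]; exact le_top
  · rw [omega_one hω]; exact div_pm1_lt_top hp i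

omit hp hω in
theorem gam_mono {i j : ℕ} (hij : j ≤ i) {x : N} (h : Gam p ω v i x) : Gam p ω v j x := by
  obtain ⟨h1, h2⟩ := h
  have hc : (j:ℝ≥0∞) ≤ (i:ℝ≥0∞) := by exact_mod_cast hij
  exact ⟨le_trans (mul_le_mul_left hc v) h1,
    lt_of_le_of_lt (ENNReal.div_le_div_right hc _) h2⟩

omit hp in
theorem gam_inv {i : ℕ} {x : N} (h : Gam p ω v i x) : Gam p ω v i x⁻¹ := by
  rwa [Gam, omega_inv hω]

omit hp in
theorem gam_mul {i : ℕ} {x y : N} (hx : Gam p ω v i x) (hy : Gam p ω v i y) :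
    Gam p ω v i (x * y) := by
  obtain ⟨hx1, hx2⟩ := hx; obtain ⟨hy1, hy2⟩ := hy
  have := omega_mul hω x y
  exact ⟨le_trans (le_min hx1 hy1) this, lt_of_lt_of_le (lt_min hx2 hy2) this⟩

omit hp in
theorem gam_pow {i : ℕ} {x : N} (h : Gam p ω v i x) (n : ℕ) : Gam p ω v i (x ^ n) := by
  obtain ⟨h1, h2⟩ := h
  exact ⟨le_trans h1 (omega_pow hω x n), lt_of_lt_of_le h2 (omega_pow hω x n)⟩

omit hp in
theorem gam_comm {i j : ℕ} {x y : N} (hx : Gam p ω v i x) (hy : Gam p ω v j y) :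
    Gam p ω v (i + j) ⁅x, y⁆ := by
  obtain ⟨hx1, hx2⟩ := hx; obtain ⟨hy1, hy2⟩ := hy
  have hcm := omega_comm hω x y
  constructor
  · push_cast
    rw [add_mul]
    exact le_trans (add_le_add hx1 hy1) hcm
  · push_cast
    rw [ENNReal.add_div]
    exact lt_of_lt_of_le (ENNReal.add_lt_add hx2 hy2) hcm

omit hp in
theorem gam_conj {i : ℕ} {g x : N} (hx : Gam p ω v i x) : Gam p ω v i (g * x * g⁻¹) := by
  obtain ⟨h1, h2⟩ := hx
  have := omega_conj hω g x
  exact ⟨le_trans h1 this, lt_of_lt_of_le h2 this⟩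

theorem gam_of_le {x : N} (h : v ≤ ω x) : Gam p ω v 1 x := by
  constructor
  · simpa using h
  · rcases eq_or_ne x 1 with rfl | hx
    · rw [omega_one hω]; exact div_pm1_lt_top hp 1
    · simpa using hω.one_div_lt x hx

omit hω in
theorem gam_K (hv0 : 0 < v) (hvtop : v < ⊤) {i : ℕ} (hpi : p ≤ i) {x : N}
    (h : Gam p ω v i x) : v + 1 < ω x := by
  have h' : Gam p ω v p x := gam_mono (hij := hpi) h
  obtain ⟨h1, h2⟩ := h'
  rcases le_total v (1 / ((p:ℝ≥0∞) - 1)) with hv | hv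
  · calc v + 1 ≤ 1 / ((p:ℝ≥0∞) - 1) + 1 := add_le_add_left hv 1
      _ = (p:ℝ≥0∞) / ((p:ℝ≥0∞) - 1) := one_div_add_one hp
      _ < ω x := h2
  · rcases eq_or_lt_of_le hv with heq | hlt
    · calc v + 1 = 1 / ((p:ℝ≥0∞) - 1) + 1 := by rw [heq]
        _ = (p:ℝ≥0∞) / ((p:ℝ≥0∞) - 1) := one_div_add_one hp
        _ < ω x := h2
    · have h1lt : (1:ℝ≥0∞) < ((p:ℝ≥0∞) - 1) * v := by
        rw [ENNReal.div_lt_iff (Or.inl (pm1_pos hp).ne') (Or.inl (pm1_ne_top))] at hlt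
        rwa [mul_comm] at hlt
      have hpv : v + 1 < (p:ℝ≥0∞) * v := by
        have hpeq : (p:ℝ≥0∞) = 1 + ((p:ℝ≥0∞) - 1) := by
          rw [add_comm, tsub_add_cancel_of_le]
          exact_mod_cast hp.one_lt.le
        rw [hpeq, add_mul, one_mul]
        exact ENNReal.add_lt_add_left hvtop.ne h1lt
      exact lt_of_lt_of_le hpv h1

end GamLemmas

section KLemmas
variable (hω : IsPValuation p ω)
include hω

theorem K_mul {x y : N} (hx : v + 1 < ω x) (hy : v + 1 < ω y) : v + 1 < ω (x * y) :=
  lt_of_lt_of_le (lt_min hx hy) (omega_mul hω x y)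

theorem K_inv {x : N} (hx : v + 1 < ω x) : v + 1 < ω x⁻¹ := by rwa [omega_inv hω]

theorem K_conj {g x : N} (hx : v + 1 < ω x) : v + 1 < ω (g * x * g⁻¹) :=
  lt_of_lt_of_le hx (omega_conj hω g x)

theorem K_pow {x : N} (hx : v + 1 < ω x) (n : ℕ) : v + 1 < ω (x ^ n) :=
  lt_of_lt_of_le hx (omega_pow hω x n)

theorem K_one (hvtop : v < ⊤) : v + 1 < ω (1 : N) := by
  rw [omega_one hω]
  exact ENNReal.add_lt_top.2 ⟨hvtop, ENNReal.one_lt_top⟩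

end KLemmas

/-- Functions `ℕ → N` of "Hall–Petrescu normal form" type: products of
`t ^ (n.choose e)` with `t` of weight `w' ≥ w` and `1 ≤ e`, `e + g ≤ w'`,
modulo junk of value `> v + 1`. -/
inductive Good (p : ℕ) (ω : N → ℝ≥0∞) (v : ℝ≥0∞) : ℕ → ℕ → (ℕ → N) → Prop
  | junk {g w : ℕ} {F : ℕ → N} (h : ∀ n, v + 1 < ω (F n) ∧ Gam p ω v w (F n)) :
      Good p ω v g w F
  | term {g w : ℕ} (t : N) (w' e : ℕ) (ht : Gam p ω v w' t) (hww : w ≤ w')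
      (he : 1 ≤ e) (hbud : e + g ≤ w') : Good p ω v g w (fun n => t ^ n.choose e)
  | mul {g w : ℕ} {F G : ℕ → N} (hF : Good p ω v g w F) (hG : Good p ω v g w G) :
      Good p ω v g w (fun n => F n * G n)

/-- Descending range product: `Q F n = F (n-1) * ⋯ * F 0`. -/
def Q (F : ℕ → N) : ℕ → N
  | 0 => 1
  | n + 1 => F n * Q F n

@[simp] theorem Q_zero (F : ℕ → N) : Q F 0 = 1 := rfl
@[simp] theorem Q_succ (F : ℕ → N) (n : ℕ) : Q F (n + 1) = F n * Q F n := rfl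

/-- Ascending range product: `fwdQ F n = F 0 * ⋯ * F (n-1)`. -/
def fwdQ (F : ℕ → N) (n : ℕ) : N := (Q (fun j => (F j)⁻¹) n)⁻¹

@[simp] theorem fwdQ_zero (F : ℕ → N) : fwdQ F 0 = 1 := by simp [fwdQ]
@[simp] theorem fwdQ_succ (F : ℕ → N) (n : ℕ) : fwdQ F (n + 1) = fwdQ F n * F n := by
  simp [fwdQ, mul_inv_rev]

theorem Q_pow (t : N) (e : ℕ) (n : ℕ) :
    Q (fun j => t ^ j.choose e) n = t ^ n.choose (e + 1) := by
  induction n with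
  | zero => simp
  | succ n ih =>
      rw [Q_succ, ih, ← pow_add, Nat.choose_succ_succ]

section GoodLemmas
variable (hp : p.Prime) (hω : IsPValuation p ω) (hv0 : 0 < v) (hvtop : v < ⊤)

theorem good_ext {g w : ℕ} {F G : ℕ → N} (h : ∀ n, F n = G n)
    (hF : Good p ω v g w F) : Good p ω v g w G := by
  have : F = G := funext h
  rwa [this] at hF

theorem good_mono {g w g' w'' : ℕ} {F : ℕ → N} (hg : g' ≤ g) (hw : w'' ≤ w)
    (hF : Good p ω v g w F) : Good p ω v g' w'' F := by
  induction hF with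
  | junk h => exact Good.junk (fun n => ⟨(h n).1, gam_mono hw (h n).2⟩)
  | term t w' e ht hww he hbud =>
      exact Good.term t w' e ht (le_trans hw hww) he (le_trans (add_le_add_right hg e) hbud)
  | mul hF hG ihF ihG => exact Good.mul ihF ihG

include hω in
theorem good_val {g w : ℕ} {F : ℕ → N} (hF : Good p ω v g w F) (n : ℕ) :
    Gam p ω v w (F n) := by
  induction hF with
  | junk h => exact (h n).2
  | term t w' e ht hww he hbud => exact gam_pow hω (gam_mono hww ht) _
  | mul hF hG ihF ihG => exact gam_mul hω ihF ihG

include hω in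
theorem good_inv {g w : ℕ} {F : ℕ → N} (hF : Good p ω v g w F) :
    Good p ω v g w (fun n => (F n)⁻¹) := by
  induction hF with
  | junk h => exact Good.junk (fun n => ⟨K_inv hω (h n).1, gam_inv hω (h n).2⟩)
  | term t w' e ht hww he hbud =>
      exact good_ext (fun n => by rw [inv_pow]) (Good.term t⁻¹ w' e (gam_inv hω ht) hww he hbud)
  | mul hF hG ihF ihG =>
      exact good_ext (fun n => by rw [mul_inv_rev]) (Good.mul ihG ihF)

include hp hω hv0 hvtop in
theorem good_junkify {g w : ℕ} {F : ℕ → N} (hpw : p ≤ w) (hF : Good p ω v g w F) (n : ℕ) :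
    v + 1 < ω (F n) ∧ Gam p ω v w (F n) := by
  induction hF with
  | junk h => exact h n
  | term t w' e ht hww he hbud =>
      have htK : v + 1 < ω t := gam_K hp hv0 hvtop (le_trans hpw hww) ht
      exact ⟨K_pow hω htK _, gam_pow hω (gam_mono hww ht) _⟩
  | mul hF hG ihF ihG => exact ⟨K_mul hω ihF.1 ihG.1, gam_mul hω ihF.2 ihG.2⟩

include hp hω hv0 hvtop in
theorem good_one {g w : ℕ} : Good p ω v g w (fun _ => (1 : N)) :=
  Good.junk (fun _ => ⟨K_one hω hvtop, gam_one hp hω w⟩)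

include hp hω hv0 hvtop in
/-- Evaluation at `n = p`: any `Good 0 2` function is junk at `p`. -/
theorem good_eval {F : ℕ → N} (hF : Good p ω v 0 2 F) : v + 1 < ω (F p) := by
  induction hF with
  | junk h => exact (h p).1
  | term t w' e ht hww he hbud =>
      rcases le_or_gt p w' with hpw | hpw
      · -- t itself is junk
        have htK : v + 1 < ω t := gam_K hp hv0 hvtop hpw ht
        exact K_pow hω htK _
      · -- e ≤ w' < p so p ∣ choose p e and choose p e ≥ 1
        have hep : e < p := lt_of_le_of_lt (by omega) hpw
        have hdvd : p ∣ p.choose e := hp.dvd_choose_self (by omega) hep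
        obtain ⟨q, hq⟩ := hdvd
        have hq1 : 1 ≤ q := by
          rcases Nat.eq_zero_or_pos q with rfl | h
          · exfalso
            have := Nat.choose_pos (le_of_lt hep)
            omega
          · exact h
        have h2v : (2:ℝ≥0∞) * v ≤ ω t := by exact_mod_cast (gam_mono hww ht).1
        have : ω (t ^ p.choose e) = ω (t ^ q) + 1 := by
          rw [hq, mul_comm, pow_mul, hω.pow_p]
        rw [this]
        have hv2 : v + 1 < 2 * v + 1 := by
          have : v < 2 * v := by
            rw [two_mul]
            exact ENNReal.lt_add_right hvtop.ne hv0.ne'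
          exact ENNReal.add_lt_add_right ENNReal.one_ne_top this
        refine lt_of_lt_of_le hv2 ?_
        exact add_le_add_left (le_trans h2v (omega_pow hω t q)) 1
  | mul hF hG ihF ihG => exact K_mul hω ihF ihG

end GoodLemmas

/-! Pure group identities used in the collection process. -/

theorem comm_mul_left (A B Z : N) : ⁅A * B, Z⁆ = A * ⁅B, Z⁆ * A⁻¹ * ⁅A, Z⁆ := by
  simp only [commutatorElement_def]; group

theorem comm_mul_right (Z A B : N) : ⁅Z, A * B⁆ = ⁅Z, A⁆ * (A * ⁅Z, B⁆ * A⁻¹) := by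
  simp only [commutatorElement_def]; group

theorem conj_eq_comm (Y X : N) : Y * X * Y⁻¹ = ⁅Y, X⁆ * X := by
  simp only [commutatorElement_def]; group

theorem comm4 (A B C D : N) : ⁅A * B, C * D⁆ =
    A * ⁅B, C⁆ * A⁻¹ * ((A * C) * ⁅B, D⁆ * (A * C)⁻¹) * ⁅A, C⁆ * (C * ⁅A, D⁆ * C⁻¹) := by
  simp only [commutatorElement_def]; group

theorem Q_congr {F G : ℕ → N} (h : ∀ j, F j = G j) (n : ℕ) : Q F n = Q G n := by
  induction n with
  | zero => rfl
  | succ n ih => rw [Q_succ, Q_succ, h n, ih]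

theorem fwdQ_congr {F G : ℕ → N} (h : ∀ j, F j = G j) (n : ℕ) : fwdQ F n = fwdQ G n := by
  unfold fwdQ
  rw [Q_congr (fun j => by rw [h j]) n]

theorem Q_mul_split (A B : ℕ → N) (n : ℕ) :
    Q (fun j => A j * B j) n = Q A n * Q B n *
      Q (fun j => (Q B (j+1))⁻¹ * ⁅(Q A j)⁻¹, B j⁆ * Q B (j+1)) n := by
  induction n with
  | zero => simp
  | succ n ih =>
      simp only [Q_succ, ih, commutatorElement_def]
      group

theorem fwd_aff (F : ℕ → N) (c : N) (n : ℕ) :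
    fwdQ (fun j => F j * c) n = fwdQ (fun j => c ^ j * F j * (c ^ j)⁻¹) n * c ^ n := by
  induction n with
  | zero => simp
  | succ n ih =>
      simp only [fwdQ_succ, ih, pow_succ]
      group

theorem Q_aff (F : ℕ → N) (c : N) (n : ℕ) :
    Q (fun j => F j * c) n =
      c ^ n * (fwdQ (fun j => (c⁻¹) ^ (j+1) * (F j)⁻¹ * ((c⁻¹) ^ (j+1))⁻¹) n)⁻¹ := by
  induction n with
  | zero => simp
  | succ n ih =>
      simp only [Q_succ, fwdQ_succ, ih, pow_succ, mul_inv_rev, inv_pow, inv_inv]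
      group

theorem comm_pow_step (s t : N) (e : ℕ) (n : ℕ) :
    ⁅s, t ^ n.choose (e+1)⁆ =
      fwdQ (fun j => t ^ j.choose (e+1) * ⁅s, t ^ j.choose e⁆ * (t ^ j.choose (e+1))⁻¹) n := by
  induction n with
  | zero => simp [commutatorElement_def]
  | succ n ih =>
      rw [fwdQ_succ, ← ih, Nat.choose_succ_succ, Nat.add_comm, pow_add, comm_mul_right]

theorem unrollQ (φ H K : ℕ → N) (h0 : φ 0 = 1) (hrec : ∀ n, φ (n+1) = H n * φ n * K n) :
    ∀ n, φ n = Q H n * fwdQ K n := by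
  intro n
  induction n with
  | zero => simp [h0]
  | succ n ih => rw [hrec, ih, Q_succ, fwdQ_succ]; group

theorem omega_comm_left (hω : IsPValuation p ω) (x y : N) : ω x ≤ ω ⁅x, y⁆ := by
  have h1 : ω x ≤ ω (y * x⁻¹ * y⁻¹) := by
    rw [← omega_inv hω x]; exact omega_conj hω y x⁻¹
  have h2 := omega_mul hω x (y * x⁻¹ * y⁻¹)
  have h3 : x * (y * x⁻¹ * y⁻¹) = ⁅x, y⁆ := by
    simp only [commutatorElement_def]; group
  rw [h3] at h2
  exact le_trans (le_min le_rfl h1) h2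

theorem omega_comm_right (hω : IsPValuation p ω) (x y : N) : ω y ≤ ω ⁅x, y⁆ := by
  have h1 : ω y ≤ ω (x * y * x⁻¹) := omega_conj hω x y
  have h2 := omega_mul hω (x * y * x⁻¹) y⁻¹
  have h3 : (x * y * x⁻¹) * y⁻¹ = ⁅x, y⁆ := by
    exact (commutatorElement_def x y).symm
  rw [h3] at h2
  rw [← omega_inv hω y] at h1
  have h1' : ω y ≤ ω (x * y * x⁻¹) := by rwa [omega_inv hω] at h1
  exact le_trans (le_min h1' (by rw [omega_inv hω])) h2

section Mega
variable (hp : p.Prime) (hω : IsPValuation p ω) (hv0 : 0 < v) (hvtop : v < ⊤)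
include hp hω hv0 hvtop

theorem qvals_of_vals {w : ℕ} {F : ℕ → N}
    (h : ∀ n, v + 1 < ω (F n) ∧ Gam p ω v w (F n)) (n : ℕ) :
    v + 1 < ω (Q F n) ∧ Gam p ω v w (Q F n) := by
  induction n with
  | zero => exact ⟨K_one hω hvtop, gam_one hp hω w⟩
  | succ n ih => exact ⟨K_mul hω (h n).1 ih.1, gam_mul hω (h n).2 ih.2⟩

theorem jrQvals {g w : ℕ} {F : ℕ → N} (hdeg : p ≤ w) (hF : Good p ω v g w F) (n : ℕ) :
    v + 1 < ω (Q F n) ∧ Gam p ω v w (Q F n) :=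
  qvals_of_vals hp hω hv0 hvtop (good_junkify hp hω hv0 hvtop hdeg hF) n

theorem jrQ {g g' w : ℕ} {F : ℕ → N} (hdeg : p ≤ w) (hF : Good p ω v g' w F) :
    Good p ω v g w (Q F) := Good.junk (jrQvals hp hω hv0 hvtop hdeg hF)

theorem jrFwdQ {g g' w : ℕ} {F : ℕ → N} (hdeg : p ≤ w) (hF : Good p ω v g' w F) :
    Good p ω v g w (fwdQ F) :=
  good_inv hω (jrQ hp hω hv0 hvtop hdeg (good_inv hω hF))

theorem jrC1 {u w g g' : ℕ} {s : N} {F : ℕ → N} (hdeg : p ≤ u + w) (hs : Gam p ω v u s)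
    (hF : Good p ω v g w F) : Good p ω v g' (w + u) (fun n => ⁅s, F n⁆) := by
  refine Good.junk (fun n => ?_)
  have hg : Gam p ω v (u + w) ⁅s, F n⁆ := gam_comm hω hs (good_val hω hF n)
  exact ⟨gam_K hp hv0 hvtop hdeg hg, Nat.add_comm u w ▸ hg⟩

theorem jrC2 {g₁ w₁ g₂ w₂ g' : ℕ} {F G : ℕ → N} (hdeg : p ≤ w₁ + w₂)
    (hF : Good p ω v g₁ w₁ F) (hG : Good p ω v g₂ w₂ G) :
    Good p ω v g' (w₁ + w₂) (fun n => ⁅F n, G n⁆) := by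
  refine Good.junk (fun n => ?_)
  have hg : Gam p ω v (w₁ + w₂) ⁅F n, G n⁆ :=
    gam_comm hω (good_val hω hF n) (good_val hω hG n)
  exact ⟨gam_K hp hv0 hvtop hdeg hg, hg⟩

omit hp hv0 hvtop in
theorem conjG {f : ℕ}
    (hC2 : ∀ g₁ w₁ g₂ w₂ (F G : ℕ → N), p ≤ w₁ + w₂ + f → 1 ≤ w₁ → 1 ≤ w₂ →
      Good p ω v g₁ w₁ F → Good p ω v g₂ w₂ G →
      Good p ω v (g₁ + g₂) (w₁ + w₂) (fun n => ⁅F n, G n⁆))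
    {gy wy gx wx : ℕ} {Y X : ℕ → N} (hcond : p ≤ wy + wx + f) (hwy : 1 ≤ wy) (hwx : 1 ≤ wx)
    (hY : Good p ω v gy wy Y) (hX : Good p ω v gx wx X) :
    Good p ω v gx wx (fun n => Y n * X n * (Y n)⁻¹) := by
  have hc := hC2 gy wy gx wx Y X hcond hwy hwx hY hX
  have hm : Good p ω v gx wx (fun n => ⁅Y n, X n⁆) := good_mono (by omega) (by omega) hc
  exact good_ext (fun n => (conj_eq_comm (Y n) (X n)).symm) (Good.mul hm hX)

theorem mega : ∀ f : ℕ,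
    (∀ g w (F : ℕ → N), p ≤ w + f → 1 ≤ w → Good p ω v (g+1) w F → Good p ω v g w (Q F)) ∧
    (∀ g w u (F : ℕ → N) (c : N), p ≤ w + f → 1 ≤ w → Good p ω v (g+1) w F →
      Gam p ω v u c → w ≤ u → g + 1 ≤ u → Good p ω v g w (Q (fun j => F j * c))) ∧
    (∀ g w u (F : ℕ → N) (c : N), p ≤ w + f → 1 ≤ w → Good p ω v (g+1) w F →
      Gam p ω v u c → w ≤ u → g + 1 ≤ u → Good p ω v g w (fwdQ (fun j => F j * c))) ∧
    (∀ u (s : N) g w (F : ℕ → N), p ≤ u + w + f → 1 ≤ u → 1 ≤ w → Gam p ω v u s →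
      Good p ω v g w F → Good p ω v (g+u) (w+u) (fun n => ⁅s, F n⁆)) ∧
    (∀ g₁ w₁ g₂ w₂ (F G : ℕ → N), p ≤ w₁ + w₂ + f → 1 ≤ w₁ → 1 ≤ w₂ →
      Good p ω v g₁ w₁ F → Good p ω v g₂ w₂ G →
      Good p ω v (g₁+g₂) (w₁+w₂) (fun n => ⁅F n, G n⁆)) := by
  intro f
  induction f with
  | zero =>
      refine ⟨?_, ?_, ?_, ?_, ?_⟩
      · intro g w F hpw hw1 hF
        exact jrQ hp hω hv0 hvtop (by omega) hF
      · intro g w u F c hpw hw1 hF hc hwu hgu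
        have hdeg : p ≤ w := by omega
        have hcK : v + 1 < ω c := gam_K hp hv0 hvtop (le_trans hdeg hwu) hc
        have hFc : Good p ω v 0 w (fun j => F j * c) := by
          refine Good.junk (fun j => ?_)
          have h := good_junkify hp hω hv0 hvtop hdeg hF j
          exact ⟨K_mul hω h.1 hcK, gam_mul hω h.2 (gam_mono hwu hc)⟩
        exact jrQ hp hω hv0 hvtop hdeg hFc
      · intro g w u F c hpw hw1 hF hc hwu hgu
        have hdeg : p ≤ w := by omega
        have hcK : v + 1 < ω c := gam_K hp hv0 hvtop (le_trans hdeg hwu) hc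
        have hFc : Good p ω v 0 w (fun j => F j * c) := by
          refine Good.junk (fun j => ?_)
          have h := good_junkify hp hω hv0 hvtop hdeg hF j
          exact ⟨K_mul hω h.1 hcK, gam_mul hω h.2 (gam_mono hwu hc)⟩
        exact jrFwdQ hp hω hv0 hvtop hdeg hFc
      · intro u s g w F hpw hu1 hw1 hs hF
        exact jrC1 hp hω hv0 hvtop (by omega) hs hF
      · intro g₁ w₁ g₂ w₂ F G hpw hw1 hw2 hF hG
        exact jrC2 hp hω hv0 hvtop (by omega) hF hG
  | succ f IH =>
      obtain ⟨hQ, hA2, hA3, hC1, hC2⟩ := IH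
      -- (1) plain range products
      have hQ' : ∀ g w (F : ℕ → N), p ≤ w + (f+1) → 1 ≤ w → Good p ω v (g+1) w F →
          Good p ω v g w (Q F) := by
        intro g w F hpw hw1 hF
        by_cases hdeg : p ≤ w
        · exact jrQ hp hω hv0 hvtop hdeg hF
        · generalize hg : g + 1 = g' at hF
          revert hg hpw hdeg hw1
          induction hF generalizing g with
          | junk h =>
              intro hw1 hpw hdeg hg
              exact Good.junk (qvals_of_vals hp hω hv0 hvtop h)
          | term t w' e ht hww he hbud =>
              intro hw1 hpw hdeg hg
              refine good_ext (fun n => (Q_pow t e n).symm) ?_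
              exact Good.term t w' (e+1) ht hww (by omega) (by omega)
          | @mul A B hFA hFB ihA ihB =>
              intro hpw hw1 hdeg hg
              have hQA : Good p ω v g w (Q A) := ihA g hpw hw1 hdeg hg
              have hQB : Good p ω v g w (Q B) := ihB g hpw hw1 hdeg hg
              rw [← hg] at hFA hFB
              have hX : Good p ω v (g + (g+1)) (w + w) (fun n => ⁅(Q A n)⁻¹, B n⁆) :=
                hC2 g w (g+1) w _ B (by omega) hw1 hw1 (good_inv hω hQA) hFB
              have hYg : Good p ω v g w (fun n => Q B (n+1)) :=
                good_ext (fun n => (Q_succ B n).symm)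
                  (Good.mul (good_mono (by omega) le_rfl hFB) hQB)
              have hY : Good p ω v g w (fun n => (Q B (n+1))⁻¹) := good_inv hω hYg
              have hE : Good p ω v (g + (g+1)) (w + w)
                  (fun n => (Q B (n+1))⁻¹ * ⁅(Q A n)⁻¹, B n⁆ * ((Q B (n+1))⁻¹)⁻¹) :=
                conjG hω hC2 (by omega) hw1 (by omega) hY hX
              have hE' : Good p ω v (g+1) (w+w)
                  (fun n => (Q B (n+1))⁻¹ * ⁅(Q A n)⁻¹, B n⁆ * Q B (n+1)) :=
                good_ext (fun n => by rw [inv_inv]) (good_mono (by omega) le_rfl hE)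
              have hD : Good p ω v g w
                  (Q (fun j => (Q B (j+1))⁻¹ * ⁅(Q A j)⁻¹, B j⁆ * Q B (j+1))) :=
                good_mono le_rfl (by omega) (hQ g (w+w) _ (by omega) (by omega) hE')
              exact good_ext (fun n => (Q_mul_split A B n).symm)
                (Good.mul (Good.mul hQA hQB) hD)
      -- (3) ascending range products with trailing constant
      have hA3' : ∀ g w u (F : ℕ → N) (c : N), p ≤ w + (f+1) → 1 ≤ w →
          Good p ω v (g+1) w F → Gam p ω v u c → w ≤ u → g + 1 ≤ u →
          Good p ω v g w (fwdQ (fun j => F j * c)) := by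
        intro g w u F c hpw hw1 hF hc hwu hgu
        by_cases hdeg : p ≤ w
        · have hcK : v + 1 < ω c := gam_K hp hv0 hvtop (le_trans hdeg hwu) hc
          have hFc : Good p ω v 0 w (fun j => F j * c) := by
            refine Good.junk (fun j => ?_)
            have h := good_junkify hp hω hv0 hvtop hdeg hF j
            exact ⟨K_mul hω h.1 hcK, gam_mul hω h.2 (gam_mono hwu hc)⟩
          exact jrFwdQ hp hω hv0 hvtop hdeg hFc
        · have hcpow : Good p ω v g w (fun n => c ^ n) :=
            good_ext (fun n => by rw [Nat.choose_one_right])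
              (Good.term c u 1 hc hwu le_rfl (by omega))
          have hcpow01 : Good p ω v 0 1 (fun n => c ^ n) :=
            good_mono (by omega) hw1 hcpow
          have hXin : Good p ω v (g+1) w (fun j => c ^ j * F j * (c ^ j)⁻¹) :=
            conjG hω hC2 (by omega) le_rfl hw1 hcpow01 hF
          have hfq : Good p ω v g w (fwdQ (fun j => c ^ j * F j * (c ^ j)⁻¹)) :=
            good_inv hω (hQ' g w _ hpw hw1 (good_inv hω hXin))
          exact good_ext (fun n => (fwd_aff F c n).symm) (Good.mul hfq hcpow)
      -- (2) descending range products with trailing constant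
      have hA2' : ∀ g w u (F : ℕ → N) (c : N), p ≤ w + (f+1) → 1 ≤ w →
          Good p ω v (g+1) w F → Gam p ω v u c → w ≤ u → g + 1 ≤ u →
          Good p ω v g w (Q (fun j => F j * c)) := by
        intro g w u F c hpw hw1 hF hc hwu hgu
        by_cases hdeg : p ≤ w
        · have hcK : v + 1 < ω c := gam_K hp hv0 hvtop (le_trans hdeg hwu) hc
          have hFc : Good p ω v 0 w (fun j => F j * c) := by
            refine Good.junk (fun j => ?_)
            have h := good_junkify hp hω hv0 hvtop hdeg hF j
            exact ⟨K_mul hω h.1 hcK, gam_mul hω h.2 (gam_mono hwu hc)⟩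
          exact jrQ hp hω hv0 hvtop hdeg hFc
        · have hcpow : Good p ω v g w (fun n => c ^ n) :=
            good_ext (fun n => by rw [Nat.choose_one_right])
              (Good.term c u 1 hc hwu le_rfl (by omega))
          have hcipow01 : Good p ω v 0 1 (fun n => (c⁻¹) ^ n) :=
            good_ext (fun n => by rw [Nat.choose_one_right])
              (Good.term (g := 0) (w := 1) c⁻¹ u 1 (gam_inv hω hc) (by omega) le_rfl
                (by omega))
          have hinner : Good p ω v (g+1) w
              (fun j => (c⁻¹) ^ j * (F j)⁻¹ * ((c⁻¹) ^ j)⁻¹) :=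
            conjG hω hC2 (by omega) le_rfl hw1 hcipow01 (good_inv hω hF)
          -- conjugate once more by the constant c⁻¹, via hC1 at fuel f
          have hcond1 : p ≤ u + w + f := by omega
          have hu1 : 1 ≤ u := by omega
          have hcomm : Good p ω v ((g+1) + u) (w + u)
              (fun n => ⁅c⁻¹, (c⁻¹) ^ n * (F n)⁻¹ * ((c⁻¹) ^ n)⁻¹⁆) :=
            hC1 u c⁻¹ (g+1) w _ hcond1 hu1 hw1 (gam_inv hω hc) hinner
          have hout : Good p ω v (g+1) w
              (fun j => c⁻¹ * ((c⁻¹) ^ j * (F j)⁻¹ * ((c⁻¹) ^ j)⁻¹) * (c⁻¹)⁻¹) := by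
            refine good_ext (fun n => (conj_eq_comm _ _).symm) ?_
            have hcm : Good p ω v (g+1) w
                (fun n => ⁅c⁻¹, (c⁻¹) ^ n * (F n)⁻¹ * ((c⁻¹) ^ n)⁻¹⁆) :=
              good_mono (by omega) (by omega) hcomm
            exact Good.mul hcm hinner
          have hout' : Good p ω v (g+1) w
              (fun j => (c⁻¹) ^ (j+1) * (F j)⁻¹ * ((c⁻¹) ^ (j+1))⁻¹) := by
            refine good_ext (fun j => ?_) hout
            rw [pow_succ']
            group
          have hfq : Good p ω v g w
              (fwdQ (fun j => (c⁻¹) ^ (j+1) * (F j)⁻¹ * ((c⁻¹) ^ (j+1))⁻¹)) :=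
            good_inv hω (hQ' g w _ hpw hw1 (good_inv hω hout'))
          exact good_ext (fun n => (Q_aff F c n).symm)
            (Good.mul hcpow (good_inv hω hfq))
      -- (4) commutator with a constant
      have hC1' : ∀ u (s : N) g w (F : ℕ → N), p ≤ u + w + (f+1) → 1 ≤ u → 1 ≤ w →
          Gam p ω v u s → Good p ω v g w F →
          Good p ω v (g+u) (w+u) (fun n => ⁅s, F n⁆) := by
        intro u s g w F hpw hu1 hw1 hs hF
        by_cases hdeg : p ≤ u + w
        · exact jrC1 hp hω hv0 hvtop hdeg hs hF
        · revert hpw hdeg hw1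
          induction hF with
          | junk h =>
              intro hpw hw1 hdeg
              refine Good.junk (fun n => ?_)
              have hg := gam_comm hω hs (h n).2
              exact ⟨lt_of_lt_of_le (h n).1 (omega_comm_right hω s _),
                by rwa [Nat.add_comm] at hg⟩
          | @mul A B hA hB ihA ihB =>
              intro hpw hw1 hdeg
              have h1 := ihA hpw hw1 hdeg
              have h2 := ihB hpw hw1 hdeg
              have hconj : Good p ω v (g+u) (w+u) (fun n => A n * ⁅s, B n⁆ * (A n)⁻¹) :=
                conjG hω hC2 (by omega) hw1 (by omega) hA h2
              exact good_ext (fun n => (comm_mul_right s (A n) (B n)).symm)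
                (Good.mul h1 hconj)
          | term t w' e ht hww he hbud =>
              intro hpw hw1 hdeg
              suffices hmain : ∀ e g, 1 ≤ e → e + g ≤ w' →
                  Good p ω v (g+u) (w'+u) (fun n => ⁅s, t ^ n.choose e⁆) by
                exact good_mono le_rfl (by omega) (hmain e g he hbud)
              intro e
              induction e with
              | zero => intro g h1 h2; exact absurd h1 (by omega)
              | succ e' ihe =>
                  intro g hge hbud'
                  have hw'1 : 1 ≤ w' := by omega
                  by_cases he0 : e' = 0
                  · subst he0
                    have hγ : Gam p ω v (u + w') ⁅s, t⁆ := gam_comm hω hs ht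
                    have hXg : Good p ω v (w'-1) w' (fun n => t ^ n.choose 1) :=
                      Good.term (g := w'-1) (w := w') t w' 1 ht le_rfl le_rfl (by omega)
                    have hcomm := hC1 (u+w') ⁅s, t⁆ (w'-1) w'
                      (fun n => t ^ n.choose 1) (by omega) (by omega) hw'1 hγ hXg
                    have hG : Good p ω v ((g+u)+1) (w'+u)
                        (fun n => ⁅t ^ n.choose 1, ⁅s, t⁆⁆) := by
                      refine good_ext (fun n => ?_)
                        (good_mono (by omega) (by omega) (good_inv hω hcomm))
                      rw [commutatorElement_inv]
                    have hfq := hA3' (g+u) (w'+u) (u+w')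
                      (fun n => ⁅t ^ n.choose 1, ⁅s, t⁆⁆) ⁅s, t⁆ (by omega) (by omega) hG hγ
                      (by omega) (by omega)
                    refine good_ext (fun n => ?_) hfq
                    rw [comm_pow_step s t 0 n]
                    exact fwdQ_congr (fun j => by
                      rw [Nat.choose_zero_right, pow_one]
                      exact (conj_eq_comm _ _).symm) n
                  · have he1 : 1 ≤ e' := by omega
                    have hψ := ihe (g+1) he1 (by omega)
                    have hXY : Good p ω v 0 1 (fun n => t ^ n.choose (e'+1)) :=
                      good_mono (by omega) hw'1
                        (Good.term (g := g) (w := w') t w' (e'+1) ht le_rfl (by omega) hbud')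
                    have hR : Good p ω v ((g+1)+u) (w'+u)
                        (fun n => t ^ n.choose (e'+1) * ⁅s, t ^ n.choose e'⁆ *
                          (t ^ n.choose (e'+1))⁻¹) :=
                      conjG hω hC2 (by omega) le_rfl (by omega) hXY hψ
                    have hR' : Good p ω v ((g+u)+1) (w'+u)
                        (fun n => t ^ n.choose (e'+1) * ⁅s, t ^ n.choose e'⁆ *
                          (t ^ n.choose (e'+1))⁻¹) :=
                      good_mono (by omega) le_rfl hR
                    have hfq : Good p ω v (g+u) (w'+u)
                        (fwdQ (fun n => t ^ n.choose (e'+1) * ⁅s, t ^ n.choose e'⁆ *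
                          (t ^ n.choose (e'+1))⁻¹)) :=
                      good_inv hω (hQ' (g+u) (w'+u) _ (by omega) (by omega)
                        (good_inv hω hR'))
                    exact good_ext (fun n => (comm_pow_step s t e' n).symm) hfq
      -- core: commutator of two term functions (Hall collection)
      have key : ∀ m e₁ e₂ g₁ g₂ w₁' w₂' (t s : N), e₁ + e₂ ≤ m → 1 ≤ e₁ → 1 ≤ e₂ →
          e₁ + g₁ ≤ w₁' → e₂ + g₂ ≤ w₂' → Gam p ω v w₁' t → Gam p ω v w₂' s →
          p ≤ w₁' + w₂' + (f+1) →
          Good p ω v (g₁+g₂) (w₁'+w₂')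
            (fun n => ⁅t ^ n.choose e₁, s ^ n.choose e₂⁆) := by
        intro m
        induction m with
        | zero =>
            intro e₁ e₂ g₁ g₂ w₁' w₂' t s hsum he₁ he₂ _ _ _ _ _
            exact absurd hsum (by omega)
        | succ m ihm =>
            intro e₁ e₂ g₁ g₂ w₁' w₂' t s hsum he₁ he₂ hb₁ hb₂ ht hs hcond
            by_cases hdeg : p ≤ w₁' + w₂'
            · refine Good.junk (fun n => ?_)
              have hgam : Gam p ω v (w₁'+w₂') ⁅t ^ n.choose e₁, s ^ n.choose e₂⁆ :=
                gam_comm hω (gam_pow hω ht _) (gam_pow hω hs _)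
              exact ⟨gam_K hp hv0 hvtop hdeg hgam, hgam⟩
            · obtain ⟨e₁', rfl⟩ : ∃ e, e₁ = e + 1 := ⟨e₁ - 1, by omega⟩
              obtain ⟨e₂', rfl⟩ : ∃ e, e₂ = e + 1 := ⟨e₂ - 1, by omega⟩
              have hw₁'1 : 1 ≤ w₁' := by omega
              have hw₂'1 : 1 ≤ w₂' := by omega
              have hA : Good p ω v g₁ w₁' (fun n => t ^ n.choose (e₁'+1)) :=
                Good.term t w₁' (e₁'+1) ht le_rfl (by omega) hb₁
              have hC : Good p ω v g₂ w₂' (fun n => s ^ n.choose (e₂'+1)) :=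
                Good.term s w₂' (e₂'+1) hs le_rfl (by omega) hb₂
              have hAY : Good p ω v 0 1 (fun n => t ^ n.choose (e₁'+1)) :=
                good_mono (by omega) hw₁'1 hA
              have hCY : Good p ω v 0 1 (fun n => s ^ n.choose (e₂'+1)) :=
                good_mono (by omega) hw₂'1 hC
              have hACY : Good p ω v 0 1
                  (fun n => t ^ n.choose (e₁'+1) * s ^ n.choose (e₂'+1)) := Good.mul hAY hCY
              have hBC : Good p ω v (g₁+g₂+1) (w₁'+w₂')
                  (fun n => ⁅t ^ n.choose e₁', s ^ n.choose (e₂'+1)⁆) := by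
                rcases Nat.eq_zero_or_pos e₁' with h0 | hpos
                · subst h0
                  have hcc := hC1' w₁' t g₂ w₂' (fun n => s ^ n.choose (e₂'+1))
                    (by omega) hw₁'1 hw₂'1 ht hC
                  refine good_ext (fun n => ?_) (good_mono (by omega) (by omega) hcc)
                  rw [Nat.choose_zero_right, pow_one]
                · exact good_mono (by omega) le_rfl
                    (ihm e₁' (e₂'+1) (g₁+1) g₂ w₁' w₂' t s (by omega) hpos (by omega)
                      (by omega) hb₂ ht hs hcond)
              have hAD : Good p ω v (g₁+g₂+1) (w₁'+w₂')
                  (fun n => ⁅t ^ n.choose (e₁'+1), s ^ n.choose e₂'⁆) := by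
                rcases Nat.eq_zero_or_pos e₂' with h0 | hpos
                · subst h0
                  have hcc := hC1' w₂' s g₁ w₁' (fun n => t ^ n.choose (e₁'+1))
                    (by omega) hw₂'1 hw₁'1 hs hA
                  refine good_ext (fun n => ?_)
                    (good_mono (by omega) (by omega) (good_inv hω hcc))
                  rw [commutatorElement_inv, Nat.choose_zero_right, pow_one]
                · exact good_mono (by omega) le_rfl
                    (ihm (e₁'+1) e₂' g₁ (g₂+1) w₁' w₂' t s (by omega) (by omega) hpos hb₁
                      (by omega) ht hs hcond)
              have hK : Good p ω v ((g₁+g₂)+1) (w₁'+w₂')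
                  (fun n => s ^ n.choose (e₂'+1) *
                    ⁅t ^ n.choose (e₁'+1), s ^ n.choose e₂'⁆ * (s ^ n.choose (e₂'+1))⁻¹) :=
                conjG hω hC2 (by omega) le_rfl (by omega) hCY hAD
              have hfqK : Good p ω v (g₁+g₂) (w₁'+w₂')
                  (fwdQ (fun n => s ^ n.choose (e₂'+1) *
                    ⁅t ^ n.choose (e₁'+1), s ^ n.choose e₂'⁆ * (s ^ n.choose (e₂'+1))⁻¹)) :=
                good_inv hω (hQ' (g₁+g₂) (w₁'+w₂') _ (by omega) (by omega) (good_inv hω hK))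
              have hABC : Good p ω v ((g₁+g₂)+1) (w₁'+w₂')
                  (fun n => t ^ n.choose (e₁'+1) *
                    ⁅t ^ n.choose e₁', s ^ n.choose (e₂'+1)⁆ * (t ^ n.choose (e₁'+1))⁻¹) :=
                conjG hω hC2 (by omega) le_rfl (by omega) hAY hBC
              have hQH : Good p ω v (g₁+g₂) (w₁'+w₂')
                  (Q (fun n => t ^ n.choose (e₁'+1) *
                    ⁅t ^ n.choose e₁', s ^ n.choose (e₂'+1)⁆ * (t ^ n.choose (e₁'+1))⁻¹ *
                    ((t ^ n.choose (e₁'+1) * s ^ n.choose (e₂'+1)) *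
                      ⁅t ^ n.choose e₁', s ^ n.choose e₂'⁆ *
                      (t ^ n.choose (e₁'+1) * s ^ n.choose (e₂'+1))⁻¹))) := by
                by_cases hcc : e₁' = 0 ∧ e₂' = 0
                · obtain ⟨h10, h20⟩ := hcc
                  subst h10; subst h20
                  have hγ : Gam p ω v (w₁'+w₂') ⁅t, s⁆ := gam_comm hω ht hs
                  have hc2 := hC1' (w₁'+w₂') ⁅t, s⁆ 0 1
                    (fun n => t ^ n.choose (0+1) * s ^ n.choose (0+1))
                    (by omega) (by omega) le_rfl hγ hACY
                  have hACγ : Good p ω v ((g₁+g₂)+1) (w₁'+w₂')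
                      (fun n => ⁅t ^ n.choose (0+1) * s ^ n.choose (0+1), ⁅t, s⁆⁆) := by
                    refine good_ext (fun n => ?_)
                      (good_mono (by omega) (by omega) (good_inv hω hc2))
                    rw [commutatorElement_inv]
                  have hH0 : Good p ω v ((g₁+g₂)+1) (w₁'+w₂')
                      (fun n => t ^ n.choose (0+1) *
                        ⁅t ^ n.choose 0, s ^ n.choose (0+1)⁆ * (t ^ n.choose (0+1))⁻¹ *
                        ⁅t ^ n.choose (0+1) * s ^ n.choose (0+1), ⁅t, s⁆⁆) :=
                    Good.mul hABC hACγ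
                  have hq := hA2' (g₁+g₂) (w₁'+w₂') (w₁'+w₂') _ ⁅t, s⁆
                    (by omega) (by omega) hH0 hγ le_rfl (by omega)
                  refine good_ext (fun n => Q_congr (fun j => ?_) n) hq
                  simp only [Nat.choose_zero_right, pow_one, commutatorElement_def]
                  group
                · have hBD : Good p ω v ((g₁+g₂)+1) (w₁'+w₂')
                      (fun n => ⁅t ^ n.choose e₁', s ^ n.choose e₂'⁆) := by
                    rcases Nat.eq_zero_or_pos e₁' with h10 | hpos1
                    · have hpos2 : 1 ≤ e₂' := by
                        rcases Nat.eq_zero_or_pos e₂' with h20 | h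
                        · exact absurd ⟨h10, h20⟩ hcc
                        · exact h
                      subst h10
                      have hcc2 := hC1' w₁' t (g₂+1) w₂' (fun n => s ^ n.choose e₂')
                        (by omega) hw₁'1 hw₂'1 ht
                        (Good.term s w₂' e₂' hs le_rfl hpos2 (by omega))
                      refine good_ext (fun n => ?_)
                        (good_mono (by omega) (by omega) hcc2)
                      rw [Nat.choose_zero_right, pow_one]
                    · rcases Nat.eq_zero_or_pos e₂' with h20 | hpos2
                      · subst h20
                        have hcc2 := hC1' w₂' s (g₁+1) w₁' (fun n => t ^ n.choose e₁')
                          (by omega) hw₂'1 hw₁'1 hs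
                          (Good.term t w₁' e₁' ht le_rfl hpos1 (by omega))
                        refine good_ext (fun n => ?_)
                          (good_mono (by omega) (by omega) (good_inv hω hcc2))
                        rw [commutatorElement_inv, Nat.choose_zero_right, pow_one]
                      · exact good_mono (by omega) le_rfl
                          (ihm e₁' e₂' (g₁+1) (g₂+1) w₁' w₂' t s (by omega) hpos1 hpos2
                            (by omega) (by omega) ht hs hcond)
                  have hACBD : Good p ω v ((g₁+g₂)+1) (w₁'+w₂')
                      (fun n => (t ^ n.choose (e₁'+1) * s ^ n.choose (e₂'+1)) *
                        ⁅t ^ n.choose e₁', s ^ n.choose e₂'⁆ *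
                        (t ^ n.choose (e₁'+1) * s ^ n.choose (e₂'+1))⁻¹) :=
                    conjG hω hC2 (by omega) le_rfl (by omega) hACY hBD
                  exact hQ' (g₁+g₂) (w₁'+w₂') _ (by omega) (by omega)
                    (Good.mul hABC hACBD)
              -- assemble via unrolling
              have hunroll := unrollQ (fun n => ⁅t ^ n.choose (e₁'+1), s ^ n.choose (e₂'+1)⁆)
                (fun n => t ^ n.choose (e₁'+1) *
                    ⁅t ^ n.choose e₁', s ^ n.choose (e₂'+1)⁆ * (t ^ n.choose (e₁'+1))⁻¹ *
                    ((t ^ n.choose (e₁'+1) * s ^ n.choose (e₂'+1)) *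
                      ⁅t ^ n.choose e₁', s ^ n.choose e₂'⁆ *
                      (t ^ n.choose (e₁'+1) * s ^ n.choose (e₂'+1))⁻¹))
                (fun n => s ^ n.choose (e₂'+1) *
                    ⁅t ^ n.choose (e₁'+1), s ^ n.choose e₂'⁆ * (s ^ n.choose (e₂'+1))⁻¹)
                (by simp [commutatorElement_def])
                (fun n => by
                  have hAe : t ^ (n+1).choose (e₁'+1) =
                      t ^ n.choose (e₁'+1) * t ^ n.choose e₁' := by
                    rw [← pow_add, Nat.choose_succ_succ, Nat.add_comm]
                  have hCe : s ^ (n+1).choose (e₂'+1) =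
                      s ^ n.choose (e₂'+1) * s ^ n.choose e₂' := by
                    rw [← pow_add, Nat.choose_succ_succ, Nat.add_comm]
                  simp only [hAe, hCe]
                  rw [comm4])
              exact good_ext (fun n => (hunroll n).symm) (Good.mul hQH hfqK)
      -- (5) commutator of two Good functions
      have hC2' : ∀ g₁ w₁ g₂ w₂ (F G : ℕ → N), p ≤ w₁ + w₂ + (f+1) → 1 ≤ w₁ → 1 ≤ w₂ →
          Good p ω v g₁ w₁ F → Good p ω v g₂ w₂ G →
          Good p ω v (g₁+g₂) (w₁+w₂) (fun n => ⁅F n, G n⁆) := by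
        intro g₁ w₁ g₂ w₂ F G hpw hw1 hw2 hF hG
        by_cases hdeg : p ≤ w₁ + w₂
        · exact jrC2 hp hω hv0 hvtop hdeg hF hG
        · revert hpw hdeg hw1
          induction hF with
          | junk h =>
              intro hpw hw1 hdeg
              refine Good.junk (fun n => ?_)
              have hg := gam_comm hω (h n).2 (good_val hω hG n)
              exact ⟨lt_of_lt_of_le (h n).1 (omega_comm_left hω _ _), hg⟩
          | @mul A B hA hB ihA ihB =>
              intro hpw hw1 hdeg
              have h1 := ihA hpw hw1 hdeg
              have h2 := ihB hpw hw1 hdeg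
              have hconj : Good p ω v (g₁+g₂) (w₁+w₂)
                  (fun n => A n * ⁅B n, G n⁆ * (A n)⁻¹) :=
                conjG hω hC2 (by omega) hw1 (by omega) hA h2
              exact good_ext (fun n => (comm_mul_left (A n) (B n) (G n)).symm)
                (Good.mul hconj h1)
          | term t w₁' e₁ ht hww he₁ hb₁ =>
              intro hpw hw1 hdeg
              revert hpw hdeg hw2
              induction hG with
              | junk h =>
                  intro hw2 hpw hdeg
                  refine Good.junk (fun n => ?_)
                  have hg := gam_comm hω (gam_pow hω (gam_mono hww ht) (n.choose e₁)) (h n).2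
                  exact ⟨lt_of_lt_of_le (h n).1 (omega_comm_right hω _ _), hg⟩
              | @mul A B hA hB ihA ihB =>
                  intro hw2 hpw hdeg
                  have h1 := ihA hw2 hpw hdeg
                  have h2 := ihB hw2 hpw hdeg
                  have hconj : Good p ω v (g₁+g₂) (w₁+w₂)
                      (fun n => A n * ⁅t ^ n.choose e₁, B n⁆ * (A n)⁻¹) :=
                    conjG hω hC2 (by omega) hw2 (by omega) hA h2
                  exact good_ext
                    (fun n => (comm_mul_right (t ^ n.choose e₁) (A n) (B n)).symm)
                    (Good.mul h1 hconj)
              | term s w₂' e₂ hs hww2 he₂ hb₂ =>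
                  intro hw2 hpw hdeg
                  exact good_mono le_rfl (by omega)
                    (key (e₁+e₂) e₁ e₂ g₁ g₂ w₁' w₂' t s le_rfl he₁ he₂ hb₁ hb₂ ht hs
                      (by omega))
      exact ⟨hQ', hA2', hA3', hC1', hC2'⟩

end Mega

section Pair
variable (hp : p.Prime) (hω : IsPValuation p ω) (hv0 : 0 < v) (hvtop : v < ⊤)
include hp hω hv0 hvtop

theorem omega_conj' (g x : N) : ω x ≤ ω (g⁻¹ * x * g) := by
  have := omega_conj hω g⁻¹ x
  rwa [inv_inv] at this

/-- The key pairwise statement: `(ab)^p ≡ a^p b^p` modulo `ω > v+1`. -/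
theorem key_pair (a b : N) (ha : v ≤ ω a) (hb : v ≤ ω b) :
    v + 1 < ω ((a ^ p * b ^ p)⁻¹ * (a * b) ^ p) := by
  obtain ⟨hQ, hA2, hA3, hC1, hC2⟩ := mega hp hω hv0 hvtop p
  have hga : Gam p ω v 1 a := gam_of_le hp hω ha
  have hgb : Gam p ω v 1 b := gam_of_le hp hω hb
  have hainv : Good p ω v 0 1 (fun n => (a ^ n)⁻¹) := by
    refine good_ext (fun n => ?_)
      (Good.term (g := 0) (w := 1) a⁻¹ 1 1 (gam_inv hω hga) le_rfl le_rfl le_rfl)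
    rw [Nat.choose_one_right, inv_pow]
  have hbinv : Good p ω v 0 1 (fun n => (b ^ n)⁻¹) := by
    refine good_ext (fun n => ?_)
      (Good.term (g := 0) (w := 1) b⁻¹ 1 1 (gam_inv hω hgb) le_rfl le_rfl le_rfl)
    rw [Nat.choose_one_right, inv_pow]
  have hcomm1 : Good p ω v 1 2 (fun n => ⁅b⁻¹, (a ^ n)⁻¹⁆) :=
    hC1 1 b⁻¹ 0 1 (fun n => (a ^ n)⁻¹) (by omega) le_rfl le_rfl (gam_inv hω hgb) hainv
  have hu0 : Good p ω v 1 2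
      (fun n => (b ^ n)⁻¹ * ⁅b⁻¹, (a ^ n)⁻¹⁆ * ((b ^ n)⁻¹)⁻¹) :=
    conjG hω hC2 (by omega) le_rfl (by omega) hbinv hcomm1
  have hu : Good p ω v 1 2 (fun n => (b ^ n)⁻¹ * ⁅b⁻¹, (a ^ n)⁻¹⁆ * b ^ n) :=
    good_ext (fun n => by rw [inv_inv]) hu0
  have hZ : Good p ω v 0 2 (Q (fun n => (b ^ n)⁻¹ * ⁅b⁻¹, (a ^ n)⁻¹⁆ * b ^ n)) :=
    hQ 0 2 _ (by omega) (by omega) hu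
  have heval := good_eval hp hω hv0 hvtop hZ
  have hiden : ∀ n, (a ^ n * b ^ n) * Q (fun n => (b ^ n)⁻¹ * ⁅b⁻¹, (a ^ n)⁻¹⁆ * b ^ n) n =
      (a * b) ^ n := by
    intro n
    induction n with
    | zero => simp
    | succ n ih =>
        have hstep : a ^ (n+1) * b ^ (n+1) * ((b ^ n)⁻¹ * ⁅b⁻¹, (a ^ n)⁻¹⁆ * b ^ n) =
            a * b * (a ^ n * b ^ n) := by
          simp only [commutatorElement_def, pow_succ]
          group
        calc a ^ (n+1) * b ^ (n+1) * Q (fun n => (b ^ n)⁻¹ * ⁅b⁻¹, (a ^ n)⁻¹⁆ * b ^ n) (n+1)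
            = (a ^ (n+1) * b ^ (n+1) * ((b ^ n)⁻¹ * ⁅b⁻¹, (a ^ n)⁻¹⁆ * b ^ n)) *
              Q (fun n => (b ^ n)⁻¹ * ⁅b⁻¹, (a ^ n)⁻¹⁆ * b ^ n) n := by
              rw [Q_succ]; group
          _ = (a * b * (a ^ n * b ^ n)) *
              Q (fun n => (b ^ n)⁻¹ * ⁅b⁻¹, (a ^ n)⁻¹⁆ * b ^ n) n := by rw [hstep]
          _ = (a * b) * ((a ^ n * b ^ n) *
              Q (fun n => (b ^ n)⁻¹ * ⁅b⁻¹, (a ^ n)⁻¹⁆ * b ^ n) n) := by group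
          _ = (a * b) * (a * b) ^ n := by rw [ih]
          _ = (a * b) ^ (n+1) := (pow_succ' _ _).symm
  have hfin : Q (fun n => (b ^ n)⁻¹ * ⁅b⁻¹, (a ^ n)⁻¹⁆ * b ^ n) p =
      (a ^ p * b ^ p)⁻¹ * (a * b) ^ p := by
    rw [← hiden p]; group
  rw [hfin] at heval
  exact heval

end Pair

end PV


open PV


/-- Let `(N, ω)` be a `p`-valued group and `N₁, N₂, N₃ ≤ N` subgroups such that
multiplication `N₁ × N₂ × N₃ → N` is a bijection and `ω (n₁n₂n₃) = min (ω n₁) (ω n₂) (ω n₃)`.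
Then for every `0 < v < ∞` the inclusions induce an isomorphism of `𝔽_p`-vector spaces
`gr_v N₁ ⊕ gr_v N₂ ⊕ gr_v N₃ ≅ gr_v N`, and, summing over `v`, an isomorphism of
`𝔽_p[π]`-modules `gr N₁ ⊕ gr N₂ ⊕ gr N₃ ≅ gr N`.

Recall `N_v = {n | v ≤ ω n}`, `N_{v+} = {n | v < ω n}` and `gr_v N = N_v/N_{v+}`; the induced
map sends `([x₁], [x₂], [x₃])` to `[x₁x₂x₃]`, and `π [x] = [xᵖ]`.  We state the conclusion
elementwise, on representatives:
(1) the map is well defined (changing each `xⱼ` within its class does not change the class of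
    the product);
(2) the map is additive (a group homomorphism on each graded piece);
(3) the map commutes with the `π`-operators, i.e. with `[x] ↦ [xᵖ]` (so the sum over `v` is
    `𝔽_p[π]`-linear);
(4) the map is injective (trivial kernel of a homomorphism of elementary abelian groups);
(5) the map is surjective. -/
theorem stmt4 {p : ℕ} (hp : p.Prime) {N : Type*} [Group N] (ω : N → ℝ≥0∞)
    (hω : IsPValuation p ω) (N₁ N₂ N₃ : Subgroup N)
    (hbij : Function.Bijective
      (fun t : ↥N₁ × ↥N₂ × ↥N₃ => ((t.1 : N) * ((t.2.1 : N) * (t.2.2 : N)))))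
    (hmin : ∀ n₁ ∈ N₁, ∀ n₂ ∈ N₂, ∀ n₃ ∈ N₃,
      ω (n₁ * (n₂ * n₃)) = min (ω n₁) (min (ω n₂) (ω n₃)))
    (v : ℝ≥0∞) (hv0 : 0 < v) (hvtop : v < ⊤) :
    -- (1) well-definedness
    (∀ x₁ ∈ N₁, ∀ x₂ ∈ N₂, ∀ x₃ ∈ N₃, ∀ z₁ ∈ N₁, ∀ z₂ ∈ N₂, ∀ z₃ ∈ N₃,
      v ≤ ω x₁ → v ≤ ω x₂ → v ≤ ω x₃ → v < ω z₁ → v < ω z₂ → v < ω z₃ →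
        v < ω ((x₁ * (x₂ * x₃))⁻¹ * ((x₁ * z₁) * ((x₂ * z₂) * (x₃ * z₃))))) ∧
    -- (2) additivity
    (∀ x₁ ∈ N₁, ∀ x₂ ∈ N₂, ∀ x₃ ∈ N₃, ∀ y₁ ∈ N₁, ∀ y₂ ∈ N₂, ∀ y₃ ∈ N₃,
      v ≤ ω x₁ → v ≤ ω x₂ → v ≤ ω x₃ → v ≤ ω y₁ → v ≤ ω y₂ → v ≤ ω y₃ →
        v < ω (((x₁ * (x₂ * x₃)) * (y₁ * (y₂ * y₃)))⁻¹ *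
          ((x₁ * y₁) * ((x₂ * y₂) * (x₃ * y₃))))) ∧
    -- (3) compatibility with π (π[x] = [xᵖ]), giving 𝔽_p[π]-linearity of the sum over v
    (∀ x₁ ∈ N₁, ∀ x₂ ∈ N₂, ∀ x₃ ∈ N₃,
      v ≤ ω x₁ → v ≤ ω x₂ → v ≤ ω x₃ →
        v + 1 < ω (((x₁ * (x₂ * x₃)) ^ p)⁻¹ * (x₁ ^ p * (x₂ ^ p * x₃ ^ p)))) ∧
    -- (4) injectivity
    (∀ x₁ ∈ N₁, ∀ x₂ ∈ N₂, ∀ x₃ ∈ N₃,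
      v ≤ ω x₁ → v ≤ ω x₂ → v ≤ ω x₃ → v < ω (x₁ * (x₂ * x₃)) →
        v < ω x₁ ∧ v < ω x₂ ∧ v < ω x₃) ∧
    -- (5) surjectivity
    (∀ n : N, v ≤ ω n → ∃ x₁ ∈ N₁, ∃ x₂ ∈ N₂, ∃ x₃ ∈ N₃,
      v ≤ ω x₁ ∧ v ≤ ω x₂ ∧ v ≤ ω x₃ ∧ v < ω ((x₁ * (x₂ * x₃))⁻¹ * n)) := by
  
  refine ⟨?_, ?_, ?_, ?_, ?_⟩
  · -- (1) well-definedness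
    intro x₁ h₁ x₂ h₂ x₃ h₃ z₁ hz₁m z₂ hz₂m z₃ hz₃m hx₁ hx₂ hx₃ h1 h2 h3
    have heq : (x₁ * (x₂ * x₃))⁻¹ * ((x₁ * z₁) * ((x₂ * z₂) * (x₃ * z₃))) =
        ((x₂*x₃)⁻¹ * z₁ * (x₂*x₃)) * ((x₃⁻¹ * z₂ * x₃) * z₃) := by group
    rw [heq]
    have c1 : v < ω ((x₂*x₃)⁻¹ * z₁ * (x₂*x₃)) :=
      lt_of_lt_of_le h1 (omega_conj' hp hω hv0 hvtop _ _)
    have c2 : v < ω (x₃⁻¹ * z₂ * x₃) :=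
      lt_of_lt_of_le h2 (omega_conj' hp hω hv0 hvtop _ _)
    have m2 : min (ω (x₃⁻¹*z₂*x₃)) (ω z₃) ≤ ω ((x₃⁻¹*z₂*x₃) * z₃) := omega_mul hω _ _
    calc v < min (ω ((x₂*x₃)⁻¹ * z₁ * (x₂*x₃))) (min (ω (x₃⁻¹*z₂*x₃)) (ω z₃)) :=
          lt_min c1 (lt_min c2 h3)
      _ ≤ min (ω ((x₂*x₃)⁻¹ * z₁ * (x₂*x₃))) (ω ((x₃⁻¹*z₂*x₃) * z₃)) :=
          min_le_min le_rfl m2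
      _ ≤ _ := omega_mul hω _ _
  · -- (2) additivity
    intro x₁ h₁ x₂ h₂ x₃ h₃ y₁ k₁ y₂ k₂ y₃ k₃ hx₁ hx₂ hx₃ hy₁ hy₂ hy₃
    have Ptrans : ∀ a b c : N, v < ω (a⁻¹*b) → v < ω (b⁻¹*c) → v < ω (a⁻¹*c) := by
      intro a b c hab hbc
      have heq : a⁻¹ * c = (a⁻¹*b) * (b⁻¹*c) := by group
      rw [heq]
      exact lt_of_lt_of_le (lt_min hab hbc) (omega_mul hω _ _)
    have Pswap : ∀ L c d R : N, v ≤ ω c → v ≤ ω d →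
        v < ω ((L*(c*(d*R)))⁻¹ * (L*(d*(c*R)))) := by
      intro L c d R hc hd
      have heq : (L*(c*(d*R)))⁻¹ * (L*(d*(c*R))) = R⁻¹ * ⁅d⁻¹, c⁻¹⁆ * R := by
        simp only [commutatorElement_def]; group
      rw [heq]
      have h1 : v < ω ⁅d⁻¹, c⁻¹⁆ := by
        calc v < v + v := ENNReal.lt_add_right hvtop.ne hv0.ne'
          _ ≤ ω d⁻¹ + ω c⁻¹ :=
              add_le_add (by rwa [omega_inv hω]) (by rwa [omega_inv hω])
          _ ≤ _ := omega_comm hω _ _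
      exact lt_of_lt_of_le h1 (omega_conj' hp hω hv0 hvtop R _)
    have s1 := Pswap (x₁*x₂) x₃ y₁ (y₂*y₃) hx₃ hy₁
    have s2 := Pswap x₁ x₂ y₁ (x₃*(y₂*y₃)) hx₂ hy₁
    have s3 := Pswap (x₁*(y₁*x₂)) x₃ y₂ y₃ hx₃ hy₂
    have e1 : ((x₁*x₂)*(x₃*(y₁*(y₂*y₃))))⁻¹ * ((x₁*x₂)*(y₁*(x₃*(y₂*y₃)))) =
        ((x₁*(x₂*x₃))*(y₁*(y₂*y₃)))⁻¹ * (x₁*(x₂*(y₁*(x₃*(y₂*y₃))))) := by group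
    rw [e1] at s1
    have e3 : ((x₁*(y₁*x₂))*(x₃*(y₂*y₃)))⁻¹ * ((x₁*(y₁*x₂))*(y₂*(x₃*y₃))) =
        (x₁*(y₁*(x₂*(x₃*(y₂*y₃)))))⁻¹ * ((x₁*y₁)*((x₂*y₂)*(x₃*y₃))) := by group
    rw [e3] at s3
    exact Ptrans _ _ _ (Ptrans _ _ _ s1 s2) s3
  · -- (3) compatibility with π
    intro x₁ h₁ x₂ h₂ x₃ h₃ hx₁ hx₂ hx₃
    have hb : v ≤ ω (x₂ * x₃) := by
      have hm := hmin 1 N₁.one_mem x₂ h₂ x₃ h₃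
      rw [one_mul, omega_one hω] at hm
      rw [hm]
      exact le_min le_top (le_min hx₂ hx₃)
    have hZ1 := key_pair hp hω hv0 hvtop x₁ (x₂*x₃) hx₁ hb
    have hZ2 := key_pair hp hω hv0 hvtop x₂ x₃ hx₂ hx₃
    have heq : ((x₁ * (x₂ * x₃)) ^ p)⁻¹ * (x₁ ^ p * (x₂ ^ p * x₃ ^ p)) =
        ((x₁ ^ p * (x₂*x₃) ^ p)⁻¹ * (x₁ * (x₂*x₃)) ^ p)⁻¹ *
        ((x₂ ^ p * x₃ ^ p)⁻¹ * (x₂ * x₃) ^ p)⁻¹ := by group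
    rw [heq]
    exact lt_of_lt_of_le (lt_min (K_inv hω hZ1) (K_inv hω hZ2)) (omega_mul hω _ _)
  · -- (4) injectivity
    intro x₁ h₁ x₂ h₂ x₃ h₃ hx₁ hx₂ hx₃ hlt
    rw [hmin x₁ h₁ x₂ h₂ x₃ h₃] at hlt
    obtain ⟨l1, l23⟩ := lt_min_iff.mp hlt
    obtain ⟨l2, l3⟩ := lt_min_iff.mp l23
    exact ⟨l1, l2, l3⟩
  · -- (5) surjectivity
    intro n hn
    obtain ⟨⟨x₁, x₂, x₃⟩, ht⟩ := hbij.2 n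
    have hm := hmin ↑x₁ x₁.2 ↑x₂ x₂.2 ↑x₃ x₃.2
    simp only at ht
    rw [ht] at hm
    have hv' : v ≤ min (ω ↑x₁) (min (ω ↑x₂) (ω ↑x₃)) := hm ▸ hn
    refine ⟨↑x₁, x₁.2, ↑x₂, x₂.2, ↑x₃, x₃.2,
      le_trans hv' (min_le_left _ _),
      le_trans hv' (le_trans (min_le_right _ _) (min_le_left _ _)),
      le_trans hv' (le_trans (min_le_right _ _) (min_le_right _ _)), ?_⟩
    rw [ht]
    simpa [omega_one hω] using hvtop
end

section
/- Let p be a prime and let (H, ω) be a saturated p-valued group, so that the set H^p of p-th powers is a subgroup of H; equip H^p with the restriction of ω. Then for every v > 0 the image of gr_{v+1}(H^p) in gr_{v+1}H under the map induced by the inclusion H^p ⊆ H equals π · gr_v H. Consequently, the inclusion H^p ⊆ H induces the zero map 𝔽_p ⊗_{𝔽_p[π]} gr(H^p) → 𝔽_p ⊗_{𝔽_p[π]} gr H, where 𝔽_p[π] → 𝔽_p is the map sending π to 0. -/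
open scoped ENNReal

/-- `(H, ω)` is saturated if every `x` with `ω x > p/(p-1)` is a `p`-th power. -/
def IsSaturated (p : ℕ) {H : Type*} [Group H] (ω : H → ℝ≥0∞) : Prop :=
  ∀ x : H, (p : ℝ≥0∞) / ((p : ℝ≥0∞) - 1) < ω x → ∃ y : H, x = y ^ p

/-- Let `(H, ω)` be a saturated `p`-valued group, and let `Hᵖ = {yᵖ : y ∈ H}`
(a subgroup, by saturation) carry the restricted `p`-valuation.  Then:

(a) for every `0 < v < ∞`, the image of `gr_{v+1}(Hᵖ)` in `gr_{v+1} H` equals `π · gr_v H`.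
    Elementwise (recall `gr_w H = H_w/H_{w+}` with `H_w = {x | w ≤ ω x}`,
    `H_{w+} = {x | w < ω x}`, and `π[y] = [yᵖ]`):
    (⊆) every `x ∈ Hᵖ` with `v + 1 ≤ ω x` satisfies `[x] = π [y] = [yᵖ]` in `gr_{v+1} H`
        for some `y ∈ H` with `v ≤ ω y`, i.e. `(yᵖ)⁻¹x ∈ H_{(v+1)+}`;
    (⊇) conversely, for every `y ∈ H` with `v ≤ ω y`, the element `yᵖ` lies in `Hᵖ` and
        has `v + 1 ≤ ω (yᵖ)` (so `π[y]` is the image of a class of `gr_{v+1}(Hᵖ)`).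

(b) Consequently the inclusion `Hᵖ ⊆ H` induces the zero map
    `𝔽_p ⊗_{𝔽_p[π]} gr (Hᵖ) → 𝔽_p ⊗_{𝔽_p[π]} gr H` (where `π ↦ 0`); elementwise: for every
    `0 < w < ∞`, the image in `gr_w H` of any class of `gr_w (Hᵖ)` lies in `π · gr H`,
    i.e. every `x ∈ Hᵖ` with `w ≤ ω x` satisfies `[x] = [yᵖ]` in `gr_w H` for some `y ∈ H`
    with `w ≤ ω y + 1`. -/
theorem stmt5 {p : ℕ} (hp : p.Prime) {H : Type*} [Group H] (ω : H → ℝ≥0∞)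
    (hω : IsPValuation p ω) (hsat : IsSaturated p ω) :
    -- (a)
    (∀ v : ℝ≥0∞, 0 < v → v < ⊤ →
      (∀ x : H, (∃ y : H, x = y ^ p) → v + 1 ≤ ω x →
        ∃ y : H, v ≤ ω y ∧ v + 1 < ω ((y ^ p)⁻¹ * x)) ∧
      (∀ y : H, v ≤ ω y → (∃ z : H, y ^ p = z ^ p) ∧ v + 1 ≤ ω (y ^ p))) ∧
    -- (b)
    (∀ w : ℝ≥0∞, 0 < w → w < ⊤ →
      ∀ x : H, (∃ y : H, x = y ^ p) → w ≤ ω x →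
        ∃ y : H, w ≤ ω y + 1 ∧ w < ω ((y ^ p)⁻¹ * x)) := by
  constructor
  · intro v hv hvt
    constructor
    · rintro x ⟨y, rfl⟩ hx
      refine ⟨y, ?_, ?_⟩
      · rw [hω.pow_p] at hx
        exact ENNReal.le_of_add_le_add_right ENNReal.one_ne_top hx
      · rw [inv_mul_cancel, (hω.eq_top_iff 1).mpr rfl]
        exact ENNReal.add_lt_top.mpr ⟨hvt, ENNReal.one_lt_top⟩
    · intro y hy
      refine ⟨⟨y, rfl⟩, ?_⟩
      rw [hω.pow_p]
      exact add_le_add_left hy 1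
  · rintro w hw hwt x ⟨y, rfl⟩ hx
    refine ⟨y, ?_, ?_⟩
    · rw [hω.pow_p] at hx; exact hx
    · rw [inv_mul_cancel, (hω.eq_top_iff 1).mpr rfl]
      exact hwt
end
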